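/- arXiv:1808.02726 — 7 statements merged into one kernel-verified Lean document; each statement's English description precedes it below -/
import Mathlib

section
/- In the random directed graph on ℤ where each pair (i,j) with i < j is independently an edge with probability p, vertex 0 connects (via a directed path) to every vertex in {1,…,n} if and only if g_j ≤ j for all j = 1,…,n, where g_j is the distance from j to the nearest i < j with (i,j) an edge. -/
/-- Pathwise equivalence in the Barak–Erdős graph: vertex `0` connects (via a directed
path) to every vertex in `{1,…,n}` iff `g_j ≤ j` for all `j = 1,…,n`, where `g_j ≥ 1` is
the distance from `j` to the nearest `i < j` with `(i,j)` an edge. -/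
theorem stmt2 (edge : ℤ → ℤ → Prop) (hedge : ∀ i j, edge i j → i < j)
    (g : ℤ → ℤ)
    (hg : ∀ j : ℤ, 1 ≤ g j ∧ edge (j - g j) j ∧
      ∀ k : ℤ, 1 ≤ k → k < g j → ¬ edge (j - k) j)
    (n : ℤ) :
    (∀ i : ℤ, 1 ≤ i → i ≤ n → Relation.ReflTransGen edge 0 i) ↔
      (∀ j : ℤ, 1 ≤ j → j ≤ n → g j ≤ j) := by
  have hmono : ∀ {a b : ℤ}, Relation.ReflTransGen edge a b → a ≤ b := by
    intro a b h
    induction h with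
    | refl => exact le_refl a
    | tail _ he ih => exact le_trans ih (le_of_lt (hedge _ _ he))
  constructor
  · intro h j hj1 hjn
    rcases (h j hj1 hjn).cases_tail with h0 | ⟨b, hb, he⟩
    · omega
    · have hb0 : (0:ℤ) ≤ b := hmono hb
      have hk1 : 1 ≤ j - b := by have := hedge _ _ he; omega
      have : ¬ (j - b < g j) := fun hlt => (hg j).2.2 _ hk1 hlt (by simpa using he)
      omega
  · intro h
    have key : ∀ m : ℕ, ∀ i : ℤ, 1 ≤ i → i ≤ n → i ≤ (m : ℤ) →
        Relation.ReflTransGen edge 0 i := by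
      intro m
      induction m with
      | zero => intro i h1 _ hm; omega
      | succ m ih =>
        intro i h1 h2 hm
        obtain ⟨hg1, hge, _⟩ := hg i
        have hgi : g i ≤ i := h i h1 h2
        rcases eq_or_lt_of_le hgi with heq | hlt
        · have : i - g i = 0 := by omega
          rw [this] at hge
          exact Relation.ReflTransGen.single hge
        · have h1' : 1 ≤ i - g i := by omega
          have h2' : i - g i ≤ n := by omega
          have hm' : i - g i ≤ (m : ℤ) := by push_cast at hm ⊢; omega
          exact (ih _ h1' h2' hm').tail hge
    intro i h1 h2
    exact key i.toNat i h1 h2 (by omega)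
end

section
/- The probability that vertex 0 in SOG(ℤ,p) connects to every vertex to its right equals ∏_{k=1}^∞ (1 - (1-p)^k), and the probability that 0 is a skeleton point (connects to every j > 0 and is reachable from every k < 0) equals (∏_{k=1}^∞ (1 - (1-p)^k))², which is strictly positive for 0 < p ≤ 1. -/
open MeasureTheory ProbabilityTheory

/-! ### Analysis: the infinite product `∏ (1-(1-p)^(k+1))` -/

section Analysis
variable {p : ℝ}

lemma sog_c_pos (hp0 : 0 < p) (hp1 : p ≤ 1) (k : ℕ) : 0 < 1 - (1 - p) ^ (k + 1) := by
  have h : (1 - p) ^ (k + 1) < 1 :=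
    pow_lt_one₀ (by linarith) (by linarith) (Nat.succ_ne_zero k)
  linarith

lemma sog_log_summable (hp0 : 0 < p) (hp1 : p ≤ 1) :
    Summable (fun k : ℕ => Real.log (1 - (1 - p) ^ (k + 1))) := by
  rw [← summable_neg_iff]
  refine Summable.of_nonneg_of_le (f := fun k : ℕ => (1 - p) ^ (k + 1) / p) ?_ ?_ ?_
  · intro k
    have := sog_c_pos hp0 hp1 k
    have hle : Real.log (1 - (1 - p) ^ (k + 1)) ≤ 0 :=
      Real.log_nonpos (by linarith) (by nlinarith [pow_nonneg (by linarith : (0:ℝ) ≤ 1 - p) (k+1)])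
    linarith
  · intro k
    set x := (1 - p) ^ (k + 1) with hx
    have hx0 : 0 ≤ x := pow_nonneg (by linarith) _
    have hxlt : x < 1 := pow_lt_one₀ (by linarith) (by linarith) (Nat.succ_ne_zero k)
    have hxle : x ≤ 1 - p := by
      calc x ≤ (1 - p) ^ 1 := pow_le_pow_of_le_one (by linarith) (by linarith) (by omega)
      _ = 1 - p := pow_one _
    have h1 : (1 - x)⁻¹ ≤ 1 + x / p := by
      rw [inv_le_iff_one_le_mul₀ (by linarith)]
      have : (1 + x / p) * (1 - x) = 1 + (x / p) * (1 - p - x) := by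
        field_simp; ring
      rw [this]
      nlinarith [div_nonneg hx0 hp0.le]
    have h2 : (1 + x / p) ≤ Real.exp (x / p) := by
      have := Real.add_one_le_exp (x / p); linarith
    have h3 : -Real.log (1 - x) = Real.log (1 - x)⁻¹ := (Real.log_inv _).symm
    rw [h3]
    show Real.log (1 - x)⁻¹ ≤ (1 - p) ^ (k + 1) / p
    rw [← hx]
    have h0 : (0:ℝ) < (1 - x)⁻¹ := inv_pos.mpr (by linarith)
    calc Real.log (1 - x)⁻¹ ≤ Real.log (Real.exp (x / p)) :=
          Real.log_le_log h0 (le_trans h1 h2)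
    _ = x / p := Real.log_exp _
  · apply Summable.div_const
    apply Summable.mul_right
    exact summable_geometric_of_lt_one (by linarith) (by linarith)

lemma sog_hasProd (hp0 : 0 < p) (hp1 : p ≤ 1) :
    HasProd (fun k : ℕ => 1 - (1 - p) ^ (k + 1))
      (Real.exp (∑' k : ℕ, Real.log (1 - (1 - p) ^ (k + 1)))) := by
  have h := (sog_log_summable hp0 hp1).hasSum.rexp
  have he : (Real.exp ∘ fun k : ℕ => Real.log (1 - (1 - p) ^ (k + 1)))
      = fun k : ℕ => 1 - (1 - p) ^ (k + 1) := by
    funext k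
    exact Real.exp_log (sog_c_pos hp0 hp1 k)
  rwa [he] at h

lemma sog_tprod_pos (hp0 : 0 < p) (hp1 : p ≤ 1) :
    0 < ∏' k : ℕ, (1 - (1 - p) ^ (k + 1)) := by
  rw [(sog_hasProd hp0 hp1).tprod_eq]
  exact Real.exp_pos _

end Analysis

/-! ### The edge-index sets -/

abbrev SOGIdx : Type := {q : ℤ × ℤ // q.1 < q.2}

def sogIdxNat : ℕ ⊕ ℕ → ℕ := Sum.elim id id

def sogEE : ℕ ⊕ ℕ → Finset SOGIdx
  | .inl j => Finset.univ.image fun i : Fin (j + 1) =>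
      ⟨((i : ℤ), (j : ℤ) + 1), by have := i.isLt; omega⟩
  | .inr j => Finset.univ.image fun i : Fin (j + 1) =>
      ⟨(-(j : ℤ) - 1, (i : ℤ) - (j : ℤ)), by have := i.isLt; omega⟩

lemma mem_sogEE_inl {j : ℕ} {q : SOGIdx} :
    q ∈ sogEE (.inl j) ↔ 0 ≤ q.1.1 ∧ q.1.2 = (j : ℤ) + 1 := by
  obtain ⟨⟨a, b⟩, hab⟩ := q
  rw [sogEE]
  simp only [Finset.mem_image, Finset.mem_univ, true_and, Subtype.mk.injEq, Prod.mk.injEq]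
  constructor
  · rintro ⟨i, h1, h2⟩
    exact ⟨h1 ▸ by positivity, h2.symm⟩
  · rintro ⟨h0, h2⟩
    exact ⟨⟨a.toNat, by omega⟩, by simp; omega, h2.symm⟩

lemma mem_sogEE_inr {j : ℕ} {q : SOGIdx} :
    q ∈ sogEE (.inr j) ↔ q.1.1 = -(j : ℤ) - 1 ∧ q.1.2 ≤ 0 := by
  obtain ⟨⟨a, b⟩, hab⟩ := q
  rw [sogEE]
  simp only [Finset.mem_image, Finset.mem_univ, true_and, Subtype.mk.injEq, Prod.mk.injEq]
  constructor
  · rintro ⟨i, h1, h2⟩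
    have := i.isLt
    exact ⟨h1.symm, by omega⟩
  · rintro ⟨h1, h2⟩
    refine ⟨⟨(b + j).toNat, by omega⟩, h1.symm, ?_⟩
    simp
    omega

lemma sogEE_card (k : ℕ ⊕ ℕ) : (sogEE k).card = sogIdxNat k + 1 := by
  cases k with
  | inl j =>
    rw [sogEE, Finset.card_image_of_injective _ ?_, Finset.card_univ, Fintype.card_fin]
    · rfl
    · intro a b hab
      simp only [Subtype.mk.injEq, Prod.mk.injEq] at hab
      exact Fin.ext (by exact_mod_cast hab.1)
  | inr j =>
    rw [sogEE, Finset.card_image_of_injective _ ?_, Finset.card_univ, Fintype.card_fin]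
    · rfl
    · intro a b hab
      simp only [Subtype.mk.injEq, Prod.mk.injEq] at hab
      exact Fin.ext (by have := hab.2; omega)

lemma sogEE_disjoint {k k' : ℕ ⊕ ℕ} (h : k ≠ k') : Disjoint (sogEE k) (sogEE k') := by
  rw [Finset.disjoint_left]
  intro q hq hq'
  cases k with
  | inl j =>
    obtain ⟨h1, h2⟩ := mem_sogEE_inl.mp hq
    cases k' with
    | inl j' =>
      obtain ⟨h1', h2'⟩ := mem_sogEE_inl.mp hq'
      rw [h2'] at h2
      have : j = j' := by omega
      exact h (by rw [this])
    | inr j' =>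
      obtain ⟨h1', h2'⟩ := mem_sogEE_inr.mp hq'
      have := q.2
      omega
  | inr j =>
    obtain ⟨h1, h2⟩ := mem_sogEE_inr.mp hq
    cases k' with
    | inl j' =>
      obtain ⟨h1', h2'⟩ := mem_sogEE_inl.mp hq'
      have := q.2
      omega
    | inr j' =>
      obtain ⟨h1', h2'⟩ := mem_sogEE_inr.mp hq'
      rw [h1'] at h1
      have : j = j' := by omega
      exact h (by rw [this])

/-! ### Probability of the elementary events -/

section Prob
variable {Ω : Type*} [MeasurableSpace Ω] {μ : Measure Ω} [IsProbabilityMeasure μ]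
  {p : ℝ} {α : ℤ → ℤ → Ω → Bool}

def sogD (α : ℤ → ℤ → Ω → Bool) (EE : Finset SOGIdx) : Set Ω :=
  {ω | ∃ q ∈ EE, α q.1.1 q.1.2 ω = true}

lemma sogD_measurable (hmeas : ∀ i j, Measurable (α i j)) (EE : Finset SOGIdx) :
    MeasurableSet (sogD α EE) := by
  have : sogD α EE = ⋃ q ∈ EE, (α q.1.1 q.1.2) ⁻¹' {true} := by
    ext ω; simp [sogD]
  rw [this]
  exact EE.measurableSet_biUnion fun q _ => hmeas _ _ (measurableSet_singleton true)

lemma sogD_meas_val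
    (hindep : iIndepFun
      (fun q : SOGIdx => α q.1.1 q.1.2) μ)
    (hbern : ∀ i j : ℤ, i < j → μ {ω | α i j ω = true} = ENNReal.ofReal p)
    (hp0 : 0 ≤ p) (hp1 : p ≤ 1) (hmeas : ∀ i j : ℤ, Measurable (α i j))
    (EE : Finset SOGIdx) :
    μ (sogD α EE) = ENNReal.ofReal (1 - (1 - p) ^ EE.card) := by
  have hcompl : (sogD α EE)ᶜ = ⋂ q ∈ EE, (fun ω => α q.1.1 q.1.2 ω) ⁻¹' {false} := by
    ext ω
    simp [sogD]
  have h2 : μ ((sogD α EE)ᶜ) = ENNReal.ofReal ((1 - p) ^ EE.card) := by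
    rw [hcompl]
    have h := hindep.measure_inter_preimage_eq_mul EE
      (sets := fun _ => ({false} : Set Bool)) (fun _ _ => measurableSet_singleton false)
    have hone : ∀ q ∈ EE, μ ((fun q : SOGIdx => α q.1.1 q.1.2) q ⁻¹' {false})
        = ENNReal.ofReal (1 - p) := by
      intro q _
      have hc : ((fun q : SOGIdx => α q.1.1 q.1.2) q) ⁻¹' {false}
          = ((fun q : SOGIdx => α q.1.1 q.1.2) q ⁻¹' {true})ᶜ := by
        ext ω; simp
      rw [hc, prob_compl_eq_one_sub (hmeas _ _ (measurableSet_singleton true))]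
      have he : (fun q : SOGIdx => α q.1.1 q.1.2) q ⁻¹' {true}
          = {ω | α q.1.1 q.1.2 ω = true} := rfl
      rw [he, hbern _ _ q.2, ← ENNReal.ofReal_one, ← ENNReal.ofReal_sub _ hp0]
    rw [h, Finset.prod_congr rfl hone, Finset.prod_const,
      ← ENNReal.ofReal_pow (by linarith)]
  have hx : (0:ℝ) ≤ (1 - p) ^ EE.card := pow_nonneg (by linarith) _
  rw [← compl_compl (sogD α EE),
    prob_compl_eq_one_sub (sogD_measurable hmeas EE).compl, h2,
    ENNReal.ofReal_sub _ hx, ENNReal.ofReal_one]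

lemma sog_prod_finset
    (hindep : iIndepFun
      (fun q : SOGIdx => α q.1.1 q.1.2) μ)
    (hmeas : ∀ i j : ℤ, Measurable (α i j))
    {κ : Type*} [DecidableEq κ] (EE : κ → Finset SOGIdx)
    (hdisj : ∀ k k', k ≠ k' → Disjoint (EE k) (EE k'))
    (T : Finset κ) :
    μ (⋂ k ∈ T, sogD α (EE k)) = ∏ k ∈ T, μ (sogD α (EE k)) := by
  classical
  induction T using Finset.induction with
  | empty => simp
  | @insert a T ha ih =>
    have hd : Disjoint (EE a) (T.biUnion EE) := by
      rw [Finset.disjoint_biUnion_right]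
      intro k hk
      exact hdisj a k (by rintro rfl; exact ha hk)
    have hIF := hindep.indepFun_finset (EE a) (T.biUnion EE) hd (fun q => hmeas _ _)
    set sa : Set ({x // x ∈ EE a} → Bool) := {v | ∃ q, v q = true} with hsa_def
    have hsa : MeasurableSet sa := by
      have : sa = ⋃ q, (fun v : {x // x ∈ EE a} → Bool => v q) ⁻¹' {true} := by
        ext v; simp [hsa_def]
      rw [this]
      exact MeasurableSet.iUnion fun q => (measurable_pi_apply q) (measurableSet_singleton true)
    set st : Set ({x // x ∈ T.biUnion EE} → Bool) :=
      ⋂ k ∈ T, {v | ∃ q : {x // x ∈ T.biUnion EE}, (q : SOGIdx) ∈ EE k ∧ v q = true} with hst_def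
    have hst : MeasurableSet st := by
      apply Finset.measurableSet_biInter
      intro k _
      have : {v : {x // x ∈ T.biUnion EE} → Bool |
          ∃ q : {x // x ∈ T.biUnion EE}, (q : SOGIdx) ∈ EE k ∧ v q = true}
          = ⋃ q : {x // x ∈ T.biUnion EE}, ⋃ _ : (q : SOGIdx) ∈ EE k,
            (fun v : {x // x ∈ T.biUnion EE} → Bool => v q) ⁻¹' {true} := by
        ext v; simp
      rw [this]
      exact MeasurableSet.iUnion fun q => MeasurableSet.iUnion fun _ =>
        (measurable_pi_apply q) (measurableSet_singleton true)
    have key := (indepFun_iff_measure_inter_preimage_eq_mul.mp hIF) sa st hsa hst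
    have hfa : (fun ω (q : {x // x ∈ EE a}) =>
        (fun q : SOGIdx => α q.1.1 q.1.2) (↑q) ω) ⁻¹' sa = sogD α (EE a) := by
      ext ω
      simp only [Set.mem_preimage, hsa_def, Set.mem_setOf_eq, sogD]
      constructor
      · rintro ⟨q, hq⟩; exact ⟨q, q.2, hq⟩
      · rintro ⟨q, hq, hq'⟩; exact ⟨⟨q, hq⟩, hq'⟩
    have hft : (fun ω (q : {x // x ∈ T.biUnion EE}) =>
        (fun q : SOGIdx => α q.1.1 q.1.2) (↑q) ω) ⁻¹' st = ⋂ k ∈ T, sogD α (EE k) := by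
      ext ω
      simp only [Set.mem_preimage, hst_def, Set.mem_iInter, Set.mem_setOf_eq, sogD]
      constructor
      · rintro h k hk
        obtain ⟨q, hq1, hq2⟩ := h k hk
        exact ⟨q, hq1, hq2⟩
      · rintro h k hk
        obtain ⟨q, hq1, hq2⟩ := h k hk
        exact ⟨⟨q, Finset.mem_biUnion.mpr ⟨k, hk, hq1⟩⟩, hq1, hq2⟩
    rw [hfa, hft] at key
    rw [Finset.set_biInter_insert, Finset.prod_insert ha, key, ih]

end Prob

/-! ### Path identities -/

section Ident
variable {Ω : Type*} {α : ℤ → ℤ → Ω → Bool}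

lemma sog_rtg_le {ω : Ω} {a b : ℤ}
    (h : Relation.ReflTransGen (fun a b : ℤ => a < b ∧ α a b ω = true) a b) : a ≤ b := by
  induction h with
  | refl => exact le_refl a
  | tail _ hr ih => exact le_trans ih (le_of_lt hr.1)

lemma sog_right_eq :
    {ω : Ω | ∀ j : ℤ, 0 < j →
        Relation.ReflTransGen (fun a b : ℤ => a < b ∧ α a b ω = true) 0 j}
      = ⋂ j : ℕ, sogD α (sogEE (.inl j)) := by
  ext ω
  simp only [Set.mem_iInter, Set.mem_setOf_eq]
  constructor
  · intro h j
    have hj := h ((j : ℤ) + 1) (by positivity)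
    rcases hj.cases_tail with he | ⟨c, hc, hr⟩
    · omega
    · have hc0 : 0 ≤ c := sog_rtg_le hc
      exact ⟨⟨(c, (j : ℤ) + 1), hr.1⟩, mem_sogEE_inl.mpr ⟨hc0, rfl⟩, hr.2⟩
  · intro h j hj
    have key : ∀ n : ℕ,
        Relation.ReflTransGen (fun a b : ℤ => a < b ∧ α a b ω = true) 0 ((n : ℤ) + 1) := by
      intro n
      induction n using Nat.strong_induction_on with
      | _ n ih =>
        obtain ⟨q, hq, hα⟩ := h n
        obtain ⟨h0, h2⟩ := mem_sogEE_inl.mp hq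
        have hlt : q.1.1 < (n : ℤ) + 1 := h2 ▸ q.2
        have hreach : Relation.ReflTransGen (fun a b : ℤ => a < b ∧ α a b ω = true) 0 q.1.1 := by
          rcases eq_or_lt_of_le h0 with he | hlt0
          · rw [← he]
          · have hm : q.1.1 = ((q.1.1 - 1).toNat : ℤ) + 1 := by omega
            rw [hm]
            exact ih (q.1.1 - 1).toNat (by omega)
        rw [h2] at hα
        exact hreach.tail ⟨hlt, hα⟩
    have hk := key (j - 1).toNat
    have hco : (((j - 1).toNat : ℤ)) + 1 = j := by omega
    rwa [hco] at hk

lemma sog_left_eq :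
    {ω : Ω | ∀ k : ℤ, k < 0 →
        Relation.ReflTransGen (fun a b : ℤ => a < b ∧ α a b ω = true) k 0}
      = ⋂ j : ℕ, sogD α (sogEE (.inr j)) := by
  ext ω
  simp only [Set.mem_iInter, Set.mem_setOf_eq]
  constructor
  · intro h j
    have hj := h (-(j : ℤ) - 1) (by omega)
    rcases hj.cases_head with he | ⟨c, hr, hc⟩
    · omega
    · have hc0 : c ≤ 0 := sog_rtg_le hc
      exact ⟨⟨(-(j : ℤ) - 1, c), hr.1⟩, mem_sogEE_inr.mpr ⟨rfl, hc0⟩, hr.2⟩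
  · intro h k hk
    have key : ∀ n : ℕ,
        Relation.ReflTransGen (fun a b : ℤ => a < b ∧ α a b ω = true) (-(n : ℤ) - 1) 0 := by
      intro n
      induction n using Nat.strong_induction_on with
      | _ n ih =>
        obtain ⟨q, hq, hα⟩ := h n
        obtain ⟨h1, h2⟩ := mem_sogEE_inr.mp hq
        have hgt : -(n : ℤ) - 1 < q.1.2 := h1 ▸ q.2
        have hreach : Relation.ReflTransGen (fun a b : ℤ => a < b ∧ α a b ω = true) q.1.2 0 := by
          rcases eq_or_lt_of_le h2 with he | hlt0
          · rw [he]
          · have hm : q.1.2 = -(((-q.1.2 - 1).toNat : ℤ)) - 1 := by omega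
            rw [hm]
            exact ih (-q.1.2 - 1).toNat (by omega)
        rw [h1] at hα
        exact Relation.ReflTransGen.head ⟨hgt, hα⟩ hreach
    have hk2 := key (-k - 1).toNat
    have hco : -(((-k - 1).toNat : ℤ)) - 1 = k := by omega
    rwa [hco] at hk2

end Ident

/-! ### Main theorem -/

section Main
open Filter Topology
variable {Ω : Type*} [MeasurableSpace Ω] {μ : Measure Ω} [IsProbabilityMeasure μ]
  {p : ℝ} {α : ℤ → ℤ → Ω → Bool}

lemma sog_measure_iInter
    (hindep : iIndepFun
      (fun q : SOGIdx => α q.1.1 q.1.2) μ)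
    (hbern : ∀ i j : ℤ, i < j → μ {ω | α i j ω = true} = ENNReal.ofReal p)
    (hp0 : 0 < p) (hp1 : p ≤ 1) (hmeas : ∀ i j : ℤ, Measurable (α i j)) :
    μ (⋂ j : ℕ, sogD α (sogEE (.inl j)))
        = ENNReal.ofReal (∏' k : ℕ, (1 - (1 - p) ^ (k + 1)))
      ∧ μ ((⋂ j : ℕ, sogD α (sogEE (.inl j))) ∩ (⋂ j : ℕ, sogD α (sogEE (.inr j))))
        = ENNReal.ofReal ((∏' k : ℕ, (1 - (1 - p) ^ (k + 1)))
            * (∏' k : ℕ, (1 - (1 - p) ^ (k + 1)))) := by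
  classical
  set c : ℕ → ℝ := fun k => 1 - (1 - p) ^ (k + 1) with hc_def
  have hc_nonneg : ∀ k, 0 ≤ c k := fun k => (sog_c_pos hp0 hp1 k).le
  have hP : HasProd c (∏' k, c k) := (sog_hasProd hp0 hp1).multipliable.hasProd
  have hDval : ∀ k : ℕ ⊕ ℕ, μ (sogD α (sogEE k)) = ENNReal.ofReal (c (sogIdxNat k)) := by
    intro k
    rw [sogD_meas_val hindep hbern hp0.le hp1 hmeas, sogEE_card]
  -- finite products, right part
  have hA1 : ∀ n : ℕ, μ (⋂ j ∈ Finset.range n, sogD α (sogEE (.inl j)))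
      = ENNReal.ofReal (∏ j ∈ Finset.range n, c j) := by
    intro n
    rw [sog_prod_finset hindep hmeas (fun j : ℕ => sogEE (.inl j))
      (fun k k' hkk => sogEE_disjoint (fun h => hkk (Sum.inl.inj h))) (Finset.range n)]
    rw [ENNReal.ofReal_prod_of_nonneg (fun j _ => hc_nonneg j)]
    exact Finset.prod_congr rfl fun j _ => hDval (.inl j)
  -- finite products, both parts
  have hA2 : ∀ n : ℕ, μ ((⋂ j ∈ Finset.range n, sogD α (sogEE (.inl j)))
        ∩ (⋂ j ∈ Finset.range n, sogD α (sogEE (.inr j))))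
      = ENNReal.ofReal ((∏ j ∈ Finset.range n, c j) * (∏ j ∈ Finset.range n, c j)) := by
    intro n
    set T : Finset (ℕ ⊕ ℕ) :=
      (Finset.range n).image Sum.inl ∪ (Finset.range n).image Sum.inr with hT_def
    have hsplit : ⋂ k ∈ T, sogD α (sogEE k)
        = (⋂ j ∈ Finset.range n, sogD α (sogEE (.inl j)))
          ∩ (⋂ j ∈ Finset.range n, sogD α (sogEE (.inr j))) := by
      ext ω
      simp only [hT_def, Set.mem_iInter, Set.mem_inter_iff, Finset.mem_union,
        Finset.mem_image, Finset.mem_range]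
      constructor
      · intro h
        exact ⟨fun j hj => h (.inl j) (Or.inl ⟨j, hj, rfl⟩),
          fun j hj => h (.inr j) (Or.inr ⟨j, hj, rfl⟩)⟩
      · rintro ⟨h1, h2⟩ k (⟨j, hj, rfl⟩ | ⟨j, hj, rfl⟩)
        · exact h1 j hj
        · exact h2 j hj
    have hTdisj : Disjoint ((Finset.range n).image Sum.inl)
        ((Finset.range n).image Sum.inr) := by
      rw [Finset.disjoint_left]
      rintro k hk hk'
      simp only [Finset.mem_image] at hk hk'
      obtain ⟨a, _, rfl⟩ := hk
      obtain ⟨b, _, hb⟩ := hk'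
      exact Sum.inl_ne_inr hb.symm
    have e1 : ∏ j ∈ Finset.range n, μ (sogD α (sogEE (Sum.inl j)))
        = ∏ j ∈ Finset.range n, ENNReal.ofReal (c j) :=
      Finset.prod_congr rfl fun j _ => hDval (.inl j)
    have e2 : ∏ j ∈ Finset.range n, μ (sogD α (sogEE (Sum.inr j)))
        = ∏ j ∈ Finset.range n, ENNReal.ofReal (c j) :=
      Finset.prod_congr rfl fun j _ => hDval (.inr j)
    rw [← hsplit, sog_prod_finset hindep hmeas sogEE (fun k k' => sogEE_disjoint) T,
      hT_def, Finset.prod_union hTdisj,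
      Finset.prod_image (fun a _ b _ h => Sum.inl.inj h),
      Finset.prod_image (fun a _ b _ h => Sum.inr.inj h),
      e1, e2, ← ENNReal.ofReal_prod_of_nonneg (fun j _ => hc_nonneg j),
      ← ENNReal.ofReal_mul (Finset.prod_nonneg fun j _ => hc_nonneg j)]
  -- limits
  have hmono1 : Antitone (fun n => ⋂ j ∈ Finset.range n, sogD α (sogEE (.inl j))) := by
    intro m n h ω hω
    simp only [Set.mem_iInter, Finset.mem_range] at *
    intro j hj
    exact hω j (lt_of_lt_of_le hj h)
  have hmeas1 : ∀ n : ℕ, NullMeasurableSet (⋂ j ∈ Finset.range n, sogD α (sogEE (.inl j))) μ :=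
    fun n => ((Finset.range n).measurableSet_biInter
      fun j _ => sogD_measurable hmeas _).nullMeasurableSet
  have hiEq1 : ⋂ n : ℕ, ⋂ j ∈ Finset.range n, sogD α (sogEE (.inl j))
      = ⋂ j : ℕ, sogD α (sogEE (.inl j)) := by
    ext ω
    simp only [Set.mem_iInter, Finset.mem_range]
    exact ⟨fun h j => h (j + 1) j (Nat.lt_succ_self j), fun h n j _ => h j⟩
  have hlim1 := tendsto_measure_iInter_atTop hmeas1 hmono1 ⟨0, measure_ne_top μ _⟩
  rw [hiEq1] at hlim1
  have hlim1' : Tendsto (fun n => ENNReal.ofReal (∏ j ∈ Finset.range n, c j)) atTop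
      (𝓝 (μ (⋂ j : ℕ, sogD α (sogEE (.inl j))))) := by
    exact hlim1.congr fun n => hA1 n
  have hlimP : Tendsto (fun n => ENNReal.ofReal (∏ j ∈ Finset.range n, c j)) atTop
      (𝓝 (ENNReal.ofReal (∏' k, c k))) :=
    (ENNReal.continuous_ofReal.tendsto _).comp hP.tendsto_prod_nat
  have h1 : μ (⋂ j : ℕ, sogD α (sogEE (.inl j))) = ENNReal.ofReal (∏' k, c k) :=
    tendsto_nhds_unique hlim1' hlimP
  -- part 2
  have hmono2 : Antitone (fun n => (⋂ j ∈ Finset.range n, sogD α (sogEE (.inl j)))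
      ∩ (⋂ j ∈ Finset.range n, sogD α (sogEE (.inr j)))) := by
    intro m n h ω hω
    simp only [Set.mem_inter_iff, Set.mem_iInter, Finset.mem_range] at *
    exact ⟨fun j hj => hω.1 j (lt_of_lt_of_le hj h), fun j hj => hω.2 j (lt_of_lt_of_le hj h)⟩
  have hmeas2 : ∀ n : ℕ, NullMeasurableSet ((⋂ j ∈ Finset.range n, sogD α (sogEE (.inl j)))
      ∩ (⋂ j ∈ Finset.range n, sogD α (sogEE (.inr j)))) μ :=
    fun n => (((Finset.range n).measurableSet_biInter
      fun j _ => sogD_measurable hmeas _).inter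
      ((Finset.range n).measurableSet_biInter
      fun j _ => sogD_measurable hmeas _)).nullMeasurableSet
  have hiEq2 : (⋂ n : ℕ, (⋂ j ∈ Finset.range n, sogD α (sogEE (.inl j)))
      ∩ (⋂ j ∈ Finset.range n, sogD α (sogEE (.inr j))))
      = (⋂ j : ℕ, sogD α (sogEE (.inl j))) ∩ (⋂ j : ℕ, sogD α (sogEE (.inr j))) := by
    ext ω
    simp only [Set.mem_inter_iff, Set.mem_iInter, Finset.mem_range]
    constructor
    · intro h
      exact ⟨fun j => (h (j + 1)).1 j (Nat.lt_succ_self j),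
        fun j => (h (j + 1)).2 j (Nat.lt_succ_self j)⟩
    · rintro ⟨h1, h2⟩ n
      exact ⟨fun j _ => h1 j, fun j _ => h2 j⟩
  have hlim2 := tendsto_measure_iInter_atTop hmeas2 hmono2 ⟨0, measure_ne_top μ _⟩
  rw [hiEq2] at hlim2
  have hlim2' : Tendsto (fun n => ENNReal.ofReal
      ((∏ j ∈ Finset.range n, c j) * (∏ j ∈ Finset.range n, c j))) atTop
      (𝓝 (μ ((⋂ j : ℕ, sogD α (sogEE (.inl j))) ∩ (⋂ j : ℕ, sogD α (sogEE (.inr j)))))) := by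
    exact hlim2.congr fun n => hA2 n
  have hlimP2 : Tendsto (fun n => ENNReal.ofReal
      ((∏ j ∈ Finset.range n, c j) * (∏ j ∈ Finset.range n, c j))) atTop
      (𝓝 (ENNReal.ofReal ((∏' k, c k) * (∏' k, c k)))) :=
    (ENNReal.continuous_ofReal.tendsto _).comp
      (hP.tendsto_prod_nat.mul hP.tendsto_prod_nat)
  exact ⟨h1, tendsto_nhds_unique hlim2' hlimP2⟩

end Main

/-- In `SOG(ℤ,p)` with i.i.d. Bernoulli(p) edge indicators, the probability that vertex `0`
connects to every vertex to its right equals `∏_{k=1}^∞ (1-(1-p)^k)`, the probability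
that `0` is a skeleton point equals the square of this product, and the product is
strictly positive for `0 < p ≤ 1`. -/
theorem stmt3 {Ω : Type*} [MeasurableSpace Ω] (μ : Measure Ω) [IsProbabilityMeasure μ]
    (p : ℝ) (hp0 : 0 < p) (hp1 : p ≤ 1)
    (α : ℤ → ℤ → Ω → Bool)
    (hmeas : ∀ i j : ℤ, Measurable (α i j))
    (hindep : iIndepFun
      (fun q : {q : ℤ × ℤ // q.1 < q.2} => α q.1.1 q.1.2) μ)
    (hbern : ∀ i j : ℤ, i < j → μ {ω | α i j ω = true} = ENNReal.ofReal p) :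
    (μ {ω | ∀ j : ℤ, 0 < j →
        Relation.ReflTransGen (fun a b : ℤ => a < b ∧ α a b ω = true) 0 j}).toReal
      = (∏' k : ℕ, (1 - (1 - p) ^ (k + 1)))
    ∧ (μ {ω | (∀ j : ℤ, 0 < j →
          Relation.ReflTransGen (fun a b : ℤ => a < b ∧ α a b ω = true) 0 j) ∧
        (∀ k : ℤ, k < 0 →
          Relation.ReflTransGen (fun a b : ℤ => a < b ∧ α a b ω = true) k 0)}).toReal
      = (∏' k : ℕ, (1 - (1 - p) ^ (k + 1))) ^ 2
    ∧ 0 < ∏' k : ℕ, (1 - (1 - p) ^ (k + 1)) := by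
  obtain ⟨h1, h2⟩ := sog_measure_iInter hindep hbern hp0 hp1 hmeas
  have hpos := sog_tprod_pos hp0 hp1 (p := p)
  refine ⟨?_, ?_, hpos⟩
  · rw [sog_right_eq, h1, ENNReal.toReal_ofReal hpos.le]
  · have hsplit : {ω : Ω | (∀ j : ℤ, 0 < j →
          Relation.ReflTransGen (fun a b : ℤ => a < b ∧ α a b ω = true) 0 j) ∧
        (∀ k : ℤ, k < 0 →
          Relation.ReflTransGen (fun a b : ℤ => a < b ∧ α a b ω = true) k 0)}
        = {ω : Ω | ∀ j : ℤ, 0 < j →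
            Relation.ReflTransGen (fun a b : ℤ => a < b ∧ α a b ω = true) 0 j}
          ∩ {ω : Ω | ∀ k : ℤ, k < 0 →
            Relation.ReflTransGen (fun a b : ℤ => a < b ∧ α a b ω = true) k 0} := rfl
    rw [hsplit, sog_right_eq, sog_left_eq, h2, ENNReal.toReal_ofReal (by positivity), sq]
end

section
/- If a vertex i is a skeleton point of SOG(ℤ,p) and x < i < y, then the maximum path length from x to y splits: L_{x,y} = L_{x,i} + L_{i,y}, where L_{a,b} denotes the maximum number of edges over directed paths from a to b. -/
/-- The maximal number of edges over directed paths from `a` to `b`: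
`sSup` of the set of `m` such that there is a path (list of vertices) with `m` edges
from `a` to `b`. -/
noncomputable def maxLen (edge : ℤ → ℤ → Prop) (a b : ℤ) : ℕ :=
  sSup {m : ℕ | ∃ l : List ℤ, l.Chain' edge ∧ l.head? = some a ∧
    l.getLast? = some b ∧ l.length = m + 1}

section helpers
variable (edge : ℤ → ℤ → Prop)

/-- `IsPath edge a b m`: there is a path from `a` to `b` with `m` edges. -/
def IsPath (a b : ℤ) (m : ℕ) : Prop :=
  ∃ l : List ℤ, l.Chain' edge ∧ l.head? = some a ∧
    l.getLast? = some b ∧ l.length = m + 1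

lemma chain_bound (hedge : ∀ i j, edge i j → i < j) :
    ∀ l : List ℤ, l.Chain' edge → ∀ a b : ℤ, l.head? = some a → l.getLast? = some b →
      (l.length : ℤ) ≤ b - a + 1 := by
  intro l
  induction l with
  | nil => intro _ a b h _; simp at h
  | cons c rest ih =>
    intro hc a b ha hb
    simp only [List.head?_cons, Option.some.injEq] at ha
    subst ha
    cases rest with
    | nil =>
      simp only [List.getLast?_singleton, Option.some.injEq] at hb
      subst hb; simp
    | cons d rest' =>
      have hcd : c < d := hedge _ _ (List.isChain_cons_cons.mp hc).1
      have := ih (List.isChain_cons_cons.mp hc).2 d b rfl (by simpa using hb)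
      simp only [List.length_cons] at this ⊢
      push_cast at this ⊢
      omega

lemma rtg_path {a b : ℤ} (h : Relation.ReflTransGen edge a b) :
    ∃ l : List ℤ, l.Chain' edge ∧ l.head? = some a ∧ l.getLast? = some b := by
  induction h with
  | refl => exact ⟨[a], List.isChain_singleton _, by simp, by simp⟩
  | @tail b c hab hbc ih =>
    obtain ⟨l, hl, hha, hlb⟩ := ih
    refine ⟨l ++ [c], ?_, ?_, by simp⟩
    · refine List.IsChain.append hl (List.isChain_singleton _) ?_
      intro u hu v hv
      simp only [List.head?_cons, Option.mem_def, Option.some.injEq] at hv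
      rw [hlb] at hu
      simp only [Option.mem_def, Option.some.injEq] at hu
      subst hu; subst hv; exact hbc
    · cases l with
      | nil => simp at hha
      | cons e l' => simpa using hha

lemma path_concat {l1 l2 : List ℤ} {a b c : ℤ}
    (h1 : l1.Chain' edge) (h2 : l2.Chain' edge)
    (ha : l1.head? = some a) (hb1 : l1.getLast? = some b) (hb2 : l2.head? = some b)
    (hc : l2.getLast? = some c) :
    ∃ l : List ℤ, l.Chain' edge ∧ l.head? = some a ∧ l.getLast? = some c ∧
      l.length + 1 = l1.length + l2.length := by
  cases l2 with
  | nil => simp at hb2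
  | cons b' l2' =>
    simp only [List.head?_cons, Option.some.injEq] at hb2
    subst hb2
    cases l2' with
    | nil =>
      simp only [List.getLast?_singleton, Option.some.injEq] at hc
      subst hc
      exact ⟨l1, h1, ha, hb1, by simp⟩
    | cons d rest =>
      refine ⟨l1 ++ (d :: rest), ?_, ?_, ?_, ?_⟩
      · refine List.IsChain.append h1 (List.isChain_cons_cons.mp h2).2 ?_
        intro u hu v hv
        rw [hb1] at hu
        simp only [Option.mem_def, Option.some.injEq, List.head?_cons] at hu hv
        subst hu; subst hv
        exact (List.isChain_cons_cons.mp h2).1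
      · cases l1 with
        | nil => simp at ha
        | cons e l' => simpa using ha
      · rw [List.getLast?_append]
        simpa using hc
      · simp only [List.length_append, List.length_cons]
        omega

lemma path_lb {l : List ℤ} {a b : ℤ}
    (ha : l.head? = some a) (hb : l.getLast? = some b) (hab : a ≠ b) :
    2 ≤ l.length := by
  cases l with
  | nil => simp at ha
  | cons c rest =>
    cases rest with
    | nil =>
      simp only [List.head?_cons, List.getLast?_singleton, Option.some.injEq] at ha hb
      exact absurd (ha.symm.trans hb) hab
    | cons d rest' => simp

lemma split_lemma (i : ℤ)
    (hright : ∀ j : ℤ, i < j → Relation.ReflTransGen edge i j)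
    (hleft : ∀ k : ℤ, k < i → Relation.ReflTransGen edge k i) :
    ∀ l : List ℤ, l.Chain' edge → ∀ a y : ℤ, l.head? = some a → l.getLast? = some y →
      a < i → i < y →
      ∃ m1 m2 : ℕ, IsPath edge a i m1 ∧ IsPath edge i y m2 ∧ l.length ≤ m1 + m2 + 1 := by
  intro l
  induction l with
  | nil => intro _ a y h; simp at h
  | cons c rest ih =>
    intro hc a y ha hy hai hiy
    simp only [List.head?_cons, Option.some.injEq] at ha
    subst ha
    cases rest with
    | nil =>
      simp only [List.getLast?_singleton, Option.some.injEq] at hy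
      omega
    | cons b rest' =>
      have hab : edge c b := (List.isChain_cons_cons.mp hc).1
      have hchain : (b :: rest').Chain' edge := (List.isChain_cons_cons.mp hc).2
      have hy' : (b :: rest').getLast? = some y := by simpa using hy
      rcases lt_trichotomy b i with hbi | hbi | hbi
      · obtain ⟨m1', m2, h1, h2, hlen⟩ := ih hchain b y rfl hy' hbi hiy
        obtain ⟨l1, hl1c, hl1h, hl1t, hl1len⟩ := h1
        refine ⟨m1' + 1, m2, ⟨c :: l1, ?_, by simp, ?_, by simp [hl1len]⟩, h2, ?_⟩
        · apply List.isChain_cons.mpr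
          refine ⟨?_, hl1c⟩
          intro h hh
          rw [hl1h] at hh
          simp only [Option.mem_def, Option.some.injEq] at hh
          subst hh; exact hab
        · cases l1 with
          | nil => simp at hl1h
          | cons => simpa using hl1t
        · simp only [List.length_cons] at hlen ⊢
          omega
      · subst hbi
        exact ⟨1, rest'.length, ⟨[c, b], List.isChain_cons_cons.mpr ⟨hab, List.isChain_singleton _⟩, by simp, by simp, by simp⟩,
          ⟨b :: rest', hchain, by simp, hy', by simp⟩, by simp⟩
      · -- i < b
        obtain ⟨l1, hl1c, hl1h, hl1t⟩ := rtg_path edge (hleft c hai)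
        obtain ⟨l2, hl2c, hl2h, hl2t⟩ := rtg_path edge (hright b hbi)
        have hl1len : 2 ≤ l1.length := path_lb hl1h hl1t (by omega)
        have hl2len : 2 ≤ l2.length := path_lb hl2h hl2t (by omega)
        obtain ⟨l3, hl3c, hl3h, hl3t, hl3len⟩ :=
          path_concat edge hl2c hchain hl2h hl2t rfl hy'
        refine ⟨l1.length - 1, l3.length - 1,
          ⟨l1, hl1c, hl1h, hl1t, by omega⟩,
          ⟨l3, hl3c, hl3h, hl3t, by omega⟩, ?_⟩
        simp only [List.length_cons] at hl3len ⊢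
        omega

end helpers

/-- If `i` is a skeleton point of a directed graph on `ℤ` (edges only from smaller to
larger integers): `i` connects to every `j > i` and every `k < i` connects to `i`, then
for `x < i < y` the maximal path length splits: `L_{x,y} = L_{x,i} + L_{i,y}`. -/
theorem stmt5 (edge : ℤ → ℤ → Prop) (hedge : ∀ i j, edge i j → i < j) (i : ℤ)
    (hright : ∀ j : ℤ, i < j → Relation.ReflTransGen edge i j)
    (hleft : ∀ k : ℤ, k < i → Relation.ReflTransGen edge k i)
    (x y : ℤ) (hx : x < i) (hy : i < y) :
    maxLen edge x y = maxLen edge x i + maxLen edge i y := by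
  have hset : ∀ a b : ℤ, {m : ℕ | ∃ l : List ℤ, l.Chain' edge ∧ l.head? = some a ∧
      l.getLast? = some b ∧ l.length = m + 1} = {m : ℕ | IsPath edge a b m} := fun _ _ => rfl
  have hbdd : ∀ a b : ℤ, BddAbove {m : ℕ | IsPath edge a b m} := by
    intro a b
    refine ⟨(b - a).toNat, ?_⟩
    rintro m ⟨l, hlc, hlh, hlt, hlen⟩
    have := chain_bound edge hedge l hlc a b hlh hlt
    rw [hlen] at this
    push_cast at this
    omega
  have hne : ∀ a b : ℤ, Relation.ReflTransGen edge a b → a ≠ b →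
      {m : ℕ | IsPath edge a b m}.Nonempty := by
    intro a b h hab
    obtain ⟨l, hlc, hlh, hlt⟩ := rtg_path edge h
    have := path_lb hlh hlt hab
    exact ⟨l.length - 1, l, hlc, hlh, hlt, by omega⟩
  have hnxi := hne x i (hleft x hx) (by omega)
  have hniy := hne i y (hright y hy) (by omega)
  have hm1 : IsPath edge x i (maxLen edge x i) := by
    have := Nat.sSup_mem hnxi (hbdd x i)
    simpa [maxLen, hset] using this
  have hm2 : IsPath edge i y (maxLen edge i y) := by
    have := Nat.sSup_mem hniy (hbdd i y)
    simpa [maxLen, hset] using this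
  obtain ⟨l1, hl1c, hl1h, hl1t, hl1len⟩ := hm1
  obtain ⟨l2, hl2c, hl2h, hl2t, hl2len⟩ := hm2
  obtain ⟨l3, hl3c, hl3h, hl3t, hl3len⟩ :=
    path_concat edge hl1c hl2c hl1h hl1t hl2h hl2t
  have hmemxy : IsPath edge x y (maxLen edge x i + maxLen edge i y) :=
    ⟨l3, hl3c, hl3h, hl3t, by omega⟩
  have hnxy : {m : ℕ | IsPath edge x y m}.Nonempty := ⟨_, hmemxy⟩
  apply le_antisymm
  · have hmxy : IsPath edge x y (maxLen edge x y) := by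
      have := Nat.sSup_mem hnxy (hbdd x y)
      simpa [maxLen, hset] using this
    obtain ⟨l, hlc, hlh, hlt, hlen⟩ := hmxy
    obtain ⟨m1, m2, h1, h2, hle⟩ :=
      split_lemma edge i hright hleft l hlc x y hlh hlt hx hy
    have e1 : m1 ≤ maxLen edge x i := le_csSup (hbdd x i) h1
    have e2 : m2 ≤ maxLen edge i y := le_csSup (hbdd i y) h2
    omega
  · exact le_csSup (hbdd x y) hmemxy
end

section
/- In a directed graph on ℤ with edges only from smaller to larger integers and real edge weights w(a,b), suppose vertex i satisfies: (i) for every n ≥ 1 the maximal path weight from i to i+n exceeds cn, (ii) for every n ≥ 1 the maximal path weight from i-n to i exceeds cn, and (iii) every edge (a,b) with a < i < b has weight w(a,b) < c(b-a). Then for all x < i < y, the maximal path weight from x to y equals the maximal path weight from x to i plus the maximal path weight from i to y. -/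
/-- The maximal weight over directed paths from `a` to `b` in a weighted directed graph
on `ℤ`; the weight of a path is the sum of its edge weights. -/
noncomputable def maxWt (edge : ℤ → ℤ → Prop) (w : ℤ → ℤ → ℝ) (a b : ℤ) : ℝ :=
  sSup {s : ℝ | ∃ l : List ℤ, l.Chain' edge ∧ l.head? = some a ∧ l.getLast? = some b ∧
    s = ((l.zip l.tail).map fun q => w q.1 q.2).sum}

namespace Stmt6Aux

variable (w : ℤ → ℤ → ℝ) (edge : ℤ → ℤ → Prop)

def wt (l : List ℤ) : ℝ := ((l.zip l.tail).map fun q => w q.1 q.2).sum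

lemma wt_cons_cons (a b : ℤ) (t : List ℤ) : wt w (a :: b :: t) = w a b + wt w (b :: t) := by
  simp [wt]

lemma wt_append : ∀ (p q : List ℤ) (m : ℤ), p.getLast? = some m →
    wt w (p ++ q) = wt w p + wt w (m :: q)
  | [], q, m, h => by simp at h
  | [a], q, m, h => by
      simp only [List.getLast?_singleton, Option.some.injEq] at h
      subst h
      simp [wt]
  | a :: b :: t, q, m, h => by
      have ih := wt_append (b :: t) q m (by simpa using h)
      simp only [List.cons_append] at ih ⊢
      rw [wt_cons_cons, wt_cons_cons, ih]
      ring

lemma glue (u v : List ℤ) (m : ℤ) (hu : u.Chain' edge) (hv : v.Chain' edge)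
    (hum : u.getLast? = some m) (hvm : v.head? = some m) :
    (u ++ v.tail).Chain' edge ∧ (u ++ v.tail).head? = u.head? ∧
    (u ++ v.tail).getLast? = v.getLast? ∧ wt w (u ++ v.tail) = wt w u + wt w v := by
  obtain ⟨v', rfl⟩ : ∃ v', v = m :: v' := by
    cases v with
    | nil => simp at hvm
    | cons cc v' =>
        have : cc = m := by simpa using hvm
        subst this; exact ⟨v', rfl⟩
  have hune : u ≠ [] := by rintro rfl; simp at hum
  rw [List.tail_cons]
  refine ⟨?_, ?_, ?_, ?_⟩
  · refine List.isChain_append.mpr ⟨hu, (List.isChain_cons.mp hv).2, ?_⟩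
    intro a ha bb hb
    have ha' : m = a := by rw [hum] at ha; simpa using ha
    subst ha'
    exact (List.isChain_cons.mp hv).1 bb hb
  · cases u with
    | nil => simp at hum
    | cons d u' => simp
  · cases v' with
    | nil => simpa using hum
    | cons e v'' =>
        rw [List.getLast?_append]
        obtain ⟨z, hz⟩ : ∃ z, (e :: v'').getLast? = some z :=
          ⟨(e :: v'').getLast (by simp), List.getLast?_eq_getLast (by simp)⟩
        simp [hz]
  · rw [wt_append w u v' m hum]

lemma split (i : ℤ) : ∀ (l : List ℤ) (x y : ℤ), l.head? = some x →
    l.getLast? = some y → x ≤ i → i < y →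
    ∃ p q a b, l = p ++ q ∧ p.getLast? = some a ∧ q.head? = some b ∧ a ≤ i ∧ i < b
  | [], x, y, hh, _, _, _ => by simp at hh
  | [z], x, y, hh, hl, hxi, hiy => by
      have hzx : z = x := by simpa using hh
      have hzy : z = y := by simpa using hl
      omega
  | z :: b :: t, x, y, hh, hl, hxi, hiy => by
      have hzx : z = x := by simpa using hh
      subst hzx
      rcases le_or_gt b i with hb | hb
      · obtain ⟨p, q, a, b', hpq, hpa, hqb, hai, hib⟩ :=
          split i (b :: t) b y rfl (by simpa using hl) hb hiy
        refine ⟨z :: p, q, a, b', ?_, ?_, hqb, hai, hib⟩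
        · rw [List.cons_append, ← hpq]
        · cases p with
          | nil => simp at hpa
          | cons pp pt => simpa using hpa
      · exact ⟨[z], b :: t, z, b, rfl, rfl, rfl, hxi, hb⟩

def Pset (a b : ℤ) : Set ℝ :=
  {s : ℝ | ∃ l : List ℤ, l.Chain' edge ∧ l.head? = some a ∧ l.getLast? = some b ∧ s = wt w l}

lemma maxWt_eq (a b : ℤ) : maxWt edge w a b = sSup (Pset w edge a b) := rfl

lemma pos_aux {S : Set ℝ} {t : ℝ} (ht : 0 ≤ t) (h : t < sSup S) : S.Nonempty ∧ BddAbove S := by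
  by_cases hS : S.Nonempty
  · by_cases hB : BddAbove S
    · exact ⟨hS, hB⟩
    · rw [Real.sSup_of_not_bddAbove hB] at h; linarith
  · rw [Set.not_nonempty_iff_eq_empty.mp hS, Real.sSup_empty] at h; linarith

end Stmt6Aux

open Stmt6Aux in
/-- If (i) every maximal path weight from `i` to `i+n` exceeds `cn`, (ii) every maximal
path weight from `i-n` to `i` exceeds `cn`, and (iii) every edge `(a,b)` with `a < i < b`
has weight `< c(b-a)`, then for all `x < i < y` the maximal path weight from `x` to `y`
splits additively at `i`. -/
theorem stmt6 (edge : ℤ → ℤ → Prop) (hedge : ∀ a b, edge a b → a < b)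
    (w : ℤ → ℤ → ℝ) (c : ℝ) (hc : 0 < c) (i : ℤ)
    (h1 : ∀ n : ℤ, 1 ≤ n → c * n < maxWt edge w i (i + n))
    (h2 : ∀ n : ℤ, 1 ≤ n → c * n < maxWt edge w (i - n) i)
    (h3 : ∀ a b : ℤ, edge a b → a < i → i < b → w a b < c * (b - a))
    (x y : ℤ) (hx : x < i) (hy : i < y) :
    maxWt edge w x y = maxWt edge w x i + maxWt edge w i y := by
  have hA := h2 (i - x) (by omega)
  rw [show i - (i - x) = x by ring, maxWt_eq] at hA
  obtain ⟨hAne, hAbdd⟩ := pos_aux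
    (le_of_lt (mul_pos hc (by exact_mod_cast (by omega : (0:ℤ) < i - x)))) hA
  have hB := h1 (y - i) (by omega)
  rw [show i + (y - i) = y by ring, maxWt_eq] at hB
  obtain ⟨hBne, hBbdd⟩ := pos_aux
    (le_of_lt (mul_pos hc (by exact_mod_cast (by omega : (0:ℤ) < y - i)))) hB
  have keyub : ∀ s ∈ Pset w edge x y, s ≤ sSup (Pset w edge x i) + sSup (Pset w edge i y) := by
    rintro s ⟨l, hch, hhd, hlst, rfl⟩
    obtain ⟨p, q, a, b, hlpq, hpa, hqb, hai, hib⟩ := split i l x y hhd hlst hx.le hy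
    subst hlpq
    obtain ⟨hp, hq, hpq⟩ := List.isChain_append.mp hch
    have hab : edge a b := hpq a (by rw [hpa]; rfl) b (by rw [hqb]; rfl)
    have hpne : p ≠ [] := by rintro rfl; simp at hpa
    obtain ⟨q', rfl⟩ : ∃ q', q = b :: q' := by
      cases q with
      | nil => simp at hqb
      | cons cc q' =>
          have : cc = b := by simpa using hqb
          subst this; exact ⟨q', rfl⟩
    have hphd : p.head? = some x := by
      cases p with
      | nil => exact absurd rfl hpne
      | cons d p' => simpa using hhd
    have hqlst : (b :: q').getLast? = some y := by
      rw [List.getLast?_append] at hlst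
      obtain ⟨z, hz⟩ : ∃ z, (b :: q').getLast? = some z :=
        ⟨(b :: q').getLast (by simp), List.getLast?_eq_getLast (by simp)⟩
      rw [hz] at hlst ⊢
      simpa using hlst
    have hsum : wt w (p ++ b :: q') = wt w p + (w a b + wt w (b :: q')) := by
      rw [wt_append w p _ a hpa, wt_cons_cons]
    rcases eq_or_lt_of_le hai with ha | hai'
    · subst ha
      have hmemA : wt w p ∈ Pset w edge x a := ⟨p, hp, hphd, hpa, rfl⟩
      have hmemB : w a b + wt w (b :: q') ∈ Pset w edge a y :=
        ⟨a :: b :: q', List.isChain_cons_cons.mpr ⟨hab, hq⟩, rfl,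
          by rw [List.getLast?_cons_cons]; exact hqlst, (wt_cons_cons w a b q').symm⟩
      have t1 := le_csSup hAbdd hmemA
      have t2 := le_csSup hBbdd hmemB
      rw [hsum]; linarith
    · have hwab := h3 a b hab hai' hib
      have h2' := h2 (i - a) (by omega)
      rw [show i - (i - a) = a by ring, maxWt_eq] at h2'
      obtain ⟨hne1, _⟩ := pos_aux
        (le_of_lt (mul_pos hc (by exact_mod_cast (by omega : (0:ℤ) < i - a)))) h2'
      obtain ⟨s1, hs1mem, hs1⟩ := exists_lt_of_lt_csSup hne1 h2'
      obtain ⟨l1, hch1, hhd1, hlst1, rfl⟩ := hs1mem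
      have h1' := h1 (b - i) (by omega)
      rw [show i + (b - i) = b by ring, maxWt_eq] at h1'
      obtain ⟨hne2, _⟩ := pos_aux
        (le_of_lt (mul_pos hc (by exact_mod_cast (by omega : (0:ℤ) < b - i)))) h1'
      obtain ⟨s2, hs2mem, hs2⟩ := exists_lt_of_lt_csSup hne2 h1'
      obtain ⟨l2, hch2, hhd2, hlst2, rfl⟩ := hs2mem
      obtain ⟨gch, ghd, glst, gwt⟩ := glue w edge p l1 a hp hch1 hpa hhd1
      have hmemA : wt w p + wt w l1 ∈ Pset w edge x i :=
        ⟨p ++ l1.tail, gch, by rw [ghd, hphd], by rw [glst, hlst1], gwt.symm⟩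
      obtain ⟨gch2, ghd2, glst2, gwt2⟩ := glue w edge l2 (b :: q') b hch2 hq hlst2 rfl
      have hmemB : wt w l2 + wt w (b :: q') ∈ Pset w edge i y :=
        ⟨l2 ++ (b :: q').tail, gch2, by rw [ghd2, hhd2], by rw [glst2, hqlst], gwt2.symm⟩
      have t1 := le_csSup hAbdd hmemA
      have t2 := le_csSup hBbdd hmemB
      have hring : c * ((b : ℝ) - a) = c * ((i : ℝ) - a) + c * ((b : ℝ) - i) := by ring
      push_cast at hs1 hs2 hwab
      rw [hsum]
      linarith
  have hCbdd : BddAbove (Pset w edge x y) := ⟨_, keyub⟩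
  have hCne : (Pset w edge x y).Nonempty := by
    obtain ⟨sa, la, hcha, hhda, hlsta, rfl⟩ := hAne
    obtain ⟨sb, lb, hchb, hhdb, hlstb, rfl⟩ := hBne
    obtain ⟨gch, ghd, glst, gwt⟩ := glue w edge la lb i hcha hchb hlsta hhdb
    exact ⟨_, la ++ lb.tail, gch, by rw [ghd, hhda], by rw [glst, hlstb], rfl⟩
  rw [maxWt_eq, maxWt_eq, maxWt_eq]
  apply le_antisymm
  · exact csSup_le hCne keyub
  · have step : ∀ sa ∈ Pset w edge x i, ∀ sb ∈ Pset w edge i y,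
        sa + sb ≤ sSup (Pset w edge x y) := by
      rintro sa ⟨la, hcha, hhda, hlsta, rfl⟩ sb ⟨lb, hchb, hhdb, hlstb, rfl⟩
      obtain ⟨gch, ghd, glst, gwt⟩ := glue w edge la lb i hcha hchb hlsta hhdb
      exact le_csSup hCbdd ⟨la ++ lb.tail, gch, by rw [ghd, hhda], by rw [glst, hlstb], gwt.symm⟩
    have hstep2 : sSup (Pset w edge x i) ≤ sSup (Pset w edge x y) - sSup (Pset w edge i y) := by
      refine csSup_le hAne fun sa hsa => ?_
      have : sSup (Pset w edge i y) ≤ sSup (Pset w edge x y) - sa :=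
        csSup_le hBne fun sb hsb => by linarith [step sa hsa sb hsb]
      linarith
    linarith
end

section
/- Let (W̃_{i,j})_{i<j} be defined by W̃_{i,j} = max over x,y with i ≤ x < y ≤ j of W_{x,y}, where W_{x,y} is the maximal weight of a path from x to y in a weighted directed graph on ℤ with nonnegative vertex weights v_i and edge weights u_{i,j}. Then the subadditivity-type inequality holds: W̃_{i,k} ≤ W̃_{i,j} + W̃_{j,k} + max_{i ≤ x ≤ j ≤ y ≤ k} (v_x + u_{x,y})⁺ for all i < j < k. -/
/-- `W_{x,y}`: the positive part of the maximal weight of a directed path from `x` to `y`,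
where the weight of a path `(i_0,…,i_ℓ)` is `∑_{r=1}^ℓ (v_{i_{r-1}} + u_{i_{r-1},i_r})`. -/
noncomputable def Wmax (edge : ℤ → ℤ → Prop) (u : ℤ → ℤ → ℝ) (v : ℤ → ℝ) (x y : ℤ) : ℝ :=
  max 0 (sSup {s : ℝ | ∃ l : List ℤ, l.Chain' edge ∧ l.head? = some x ∧
    l.getLast? = some y ∧ 2 ≤ l.length ∧
    s = ((l.zip l.tail).map fun q => v q.1 + u q.1 q.2).sum})

/-- `W̃_{i,j} = max_{i ≤ x < y ≤ j} W_{x,y}`. -/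
noncomputable def Wtil (edge : ℤ → ℤ → Prop) (u : ℤ → ℤ → ℝ) (v : ℤ → ℝ) (i j : ℤ) : ℝ :=
  sSup {s : ℝ | ∃ x y : ℤ, i ≤ x ∧ x < y ∧ y ≤ j ∧ s = Wmax edge u v x y}

private noncomputable def wsum (u : ℤ → ℤ → ℝ) (v : ℤ → ℝ) (l : List ℤ) : ℝ :=
  ((l.zip l.tail).map fun q => v q.1 + u q.1 q.2).sum

private lemma wsum_single (u : ℤ → ℤ → ℝ) (v : ℤ → ℝ) (a : ℤ) : wsum u v [a] = 0 := by
  simp [wsum]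

private lemma wsum_cons_cons (u : ℤ → ℤ → ℝ) (v : ℤ → ℝ) (a b : ℤ) (t : List ℤ) :
    wsum u v (a :: b :: t) = (v a + u a b) + wsum u v (b :: t) := by
  simp [wsum]

private lemma wsum_append (u : ℤ → ℤ → ℝ) (v : ℤ → ℝ) :
    ∀ (l1 : List ℤ) {l2 : List ℤ} {a b : ℤ}, l1.getLast? = some a → l2.head? = some b →
    wsum u v (l1 ++ l2) = wsum u v l1 + (v a + u a b) + wsum u v l2
  | [], _, _, _, h1, _ => by simp at h1
  | [c], l2, a, b, h1, h2 => by
    simp at h1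
    subst h1
    cases l2 with
    | nil => simp at h2
    | cons d t2 =>
      simp at h2
      subst h2
      rw [List.singleton_append, wsum_cons_cons, wsum_single]
      ring
  | c :: d :: t, l2, a, b, h1, h2 => by
    rw [List.getLast?_cons_cons] at h1
    have ih := wsum_append u v (d :: t) h1 h2
    show wsum u v (c :: d :: (t ++ l2)) = _
    rw [wsum_cons_cons, show d :: (t ++ l2) = (d :: t) ++ l2 from rfl, ih, wsum_cons_cons]
    ring

private lemma pairwise_head_le {l : List ℤ} {x a : ℤ} (hp : l.Pairwise (· < ·))
    (hh : l.head? = some x) (ha : a ∈ l) : x ≤ a := by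
  cases l with
  | nil => simp at hh
  | cons c t =>
    simp at hh
    subst hh
    rcases List.mem_cons.mp ha with h | h
    · omega
    · exact le_of_lt ((List.pairwise_cons.mp hp).1 a h)

private lemma pairwise_le_last {l : List ℤ} {y a : ℤ} (hp : l.Pairwise (· < ·))
    (hl : l.getLast? = some y) (ha : a ∈ l) : a ≤ y := by
  have hp' : l.reverse.Pairwise (fun p q : ℤ => q < p) := List.pairwise_reverse.mpr hp
  have hh' : l.reverse.head? = some y := by rw [List.head?_reverse]; exact hl
  have ha' : a ∈ l.reverse := List.mem_reverse.mpr ha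
  cases hr : l.reverse with
  | nil => rw [hr] at ha'; simp at ha'
  | cons c t =>
    rw [hr] at hh' hp' ha'
    simp at hh'
    subst hh'
    rcases List.mem_cons.mp ha' with h | h
    · omega
    · exact le_of_lt ((List.pairwise_cons.mp hp').1 a h)

private lemma pairwise_head_lt_last {l : List ℤ} {x y : ℤ} (hp : l.Pairwise (· < ·))
    (hh : l.head? = some x) (hl : l.getLast? = some y) (hlen : 2 ≤ l.length) : x < y := by
  match l, hlen with
  | c :: d :: t, _ =>
    simp at hh
    subst hh
    rw [List.getLast?_cons_cons] at hl
    have hy : y ∈ d :: t := List.mem_of_getLast? hl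
    exact (List.pairwise_cons.mp hp).1 y hy

private lemma nodup_zip {α β : Type*} : ∀ (l1 : List α) (l2 : List β), l1.Nodup →
    (l1.zip l2).Nodup
  | [], _, _ => by simp
  | _ :: _, [], _ => by simp
  | a :: t1, b :: t2, h => by
    rw [List.zip_cons_cons]
    refine List.nodup_cons.mpr ⟨fun hmem => ?_, nodup_zip t1 t2 (List.nodup_cons.mp h).2⟩
    exact (List.nodup_cons.mp h).1 (List.of_mem_zip hmem).1

/-- The path-weight set is bounded above. -/
private lemma bddAbove_pathset (edge : ℤ → ℤ → Prop) (hedge : ∀ a b, edge a b → a < b)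
    (u : ℤ → ℤ → ℝ) (v : ℤ → ℝ) (x y : ℤ) :
    BddAbove {s : ℝ | ∃ l : List ℤ, l.Chain' edge ∧ l.head? = some x ∧
      l.getLast? = some y ∧ 2 ≤ l.length ∧
      s = ((l.zip l.tail).map fun q => v q.1 + u q.1 q.2).sum} := by
  classical
  set N : Finset (ℤ × ℤ) := Finset.Icc x y ×ˢ Finset.Icc x y with hN
  refine ⟨∑ q ∈ N, max 0 (v q.1 + u q.1 q.2), ?_⟩
  rintro s ⟨l, hc, hh, hl, hlen, rfl⟩
  have hp : l.Pairwise (· < ·) := List.isChain_iff_pairwise.mp (hc.imp hedge)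
  have hnd : l.Nodup := hp.nodup
  have hznd : (l.zip l.tail).Nodup := nodup_zip _ _ hnd
  have hmem : ∀ q ∈ (l.zip l.tail).toFinset, q ∈ N := by
    intro q hq
    rw [List.mem_toFinset] at hq
    obtain ⟨h1, h2⟩ := List.of_mem_zip hq
    have h2' := List.mem_of_mem_tail h2
    rw [hN, Finset.mem_product, Finset.mem_Icc, Finset.mem_Icc]
    exact ⟨⟨pairwise_head_le hp hh h1, pairwise_le_last hp hl h1⟩,
      ⟨pairwise_head_le hp hh h2', pairwise_le_last hp hl h2'⟩⟩
  calc ((l.zip l.tail).map fun q => v q.1 + u q.1 q.2).sum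
      = ∑ q ∈ (l.zip l.tail).toFinset, (v q.1 + u q.1 q.2) :=
        (List.sum_toFinset _ hznd).symm
    _ ≤ ∑ q ∈ (l.zip l.tail).toFinset, max 0 (v q.1 + u q.1 q.2) :=
        Finset.sum_le_sum fun q _ => le_max_right _ _
    _ ≤ ∑ q ∈ N, max 0 (v q.1 + u q.1 q.2) :=
        Finset.sum_le_sum_of_subset_of_nonneg hmem fun q _ _ => le_max_left _ _

private lemma bddAbove_wtilset (edge : ℤ → ℤ → Prop) (u : ℤ → ℤ → ℝ) (v : ℤ → ℝ) (i j : ℤ) :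
    BddAbove {s : ℝ | ∃ x y : ℤ, i ≤ x ∧ x < y ∧ y ≤ j ∧ s = Wmax edge u v x y} := by
  classical
  apply BddAbove.mono (t := (fun p : ℤ × ℤ => Wmax edge u v p.1 p.2) ''
    ↑(Finset.Icc i j ×ˢ Finset.Icc i j))
  · rintro s ⟨x, y, h1, h2, h3, rfl⟩
    exact ⟨(x, y), by simp [Finset.mem_Icc]; omega, rfl⟩
  · exact Set.Finite.bddAbove ((Finset.Icc i j ×ˢ Finset.Icc i j).finite_toSet.image _)

private lemma bddAbove_crossset (u : ℤ → ℤ → ℝ) (v : ℤ → ℝ) (i j k : ℤ) :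
    BddAbove {t : ℝ | ∃ x y : ℤ, i ≤ x ∧ x ≤ j ∧ j ≤ y ∧ y ≤ k ∧
      t = max 0 (v x + u x y)} := by
  classical
  apply BddAbove.mono (t := (fun p : ℤ × ℤ => max 0 (v p.1 + u p.1 p.2)) ''
    ↑(Finset.Icc i j ×ˢ Finset.Icc j k))
  · rintro s ⟨x, y, h1, h2, h3, h4, rfl⟩
    exact ⟨(x, y), by simp [Finset.mem_Icc]; omega, rfl⟩
  · exact Set.Finite.bddAbove ((Finset.Icc i j ×ˢ Finset.Icc j k).finite_toSet.image _)

private lemma wtil_nonneg (edge : ℤ → ℤ → Prop) (u : ℤ → ℤ → ℝ) (v : ℤ → ℝ) {i j : ℤ}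
    (hij : i < j) : 0 ≤ Wtil edge u v i j := by
  have h0 : (0:ℝ) ≤ Wmax edge u v i j := le_max_left _ _
  refine le_trans h0 (le_csSup (bddAbove_wtilset edge u v i j) ?_)
  exact ⟨i, j, le_refl _, hij, le_refl _, rfl⟩

/-- The subadditivity-type inequality
`W̃_{i,k} ≤ W̃_{i,j} + W̃_{j,k} + max_{i ≤ x ≤ j ≤ y ≤ k} (v_x + u_{x,y})⁺`,
holding pathwise for nonnegative vertex weights. -/
theorem stmt7 (edge : ℤ → ℤ → Prop) (hedge : ∀ a b, edge a b → a < b)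
    (u : ℤ → ℤ → ℝ) (v : ℤ → ℝ) (hv : ∀ x, 0 ≤ v x)
    (i j k : ℤ) (hij : i < j) (hjk : j < k) :
    Wtil edge u v i k ≤ Wtil edge u v i j + Wtil edge u v j k +
      sSup {t : ℝ | ∃ x y : ℤ, i ≤ x ∧ x ≤ j ∧ j ≤ y ∧ y ≤ k ∧
        t = max 0 (v x + u x y)} := by
  classical
  have hBij := bddAbove_wtilset edge u v i j
  have hBjk := bddAbove_wtilset edge u v j k
  have hBc := bddAbove_crossset u v i j k
  set B := sSup {t : ℝ | ∃ x y : ℤ, i ≤ x ∧ x ≤ j ∧ j ≤ y ∧ y ≤ k ∧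
    t = max 0 (v x + u x y)} with hBdef
  have hWij0 : 0 ≤ Wtil edge u v i j := wtil_nonneg _ _ _ hij
  have hWjk0 : 0 ≤ Wtil edge u v j k := wtil_nonneg _ _ _ hjk
  have hB0 : 0 ≤ B := by
    refine le_trans (le_max_left 0 (v j + u j j)) (le_csSup hBc ?_)
    exact ⟨j, j, le_of_lt hij, le_refl _, le_refl _, le_of_lt hjk, rfl⟩
  have hRHS0 : 0 ≤ Wtil edge u v i j + Wtil edge u v j k + B := by linarith
  refine csSup_le ⟨Wmax edge u v i k, i, k, le_refl _, lt_trans hij hjk, le_refl _, rfl⟩ ?_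
  rintro s ⟨x, y, hix, hxy, hyk, rfl⟩
  rw [Wmax]
  refine max_le hRHS0 (Real.sSup_le ?_ hRHS0)
  rintro s ⟨l, hc, hh, hl, hlen, rfl⟩
  show wsum u v l ≤ _
  have hp : l.Pairwise (· < ·) := List.isChain_iff_pairwise.mp (hc.imp hedge)
  by_cases hyj : y ≤ j
  · have h1 : wsum u v l ≤ Wmax edge u v x y :=
      le_trans (le_csSup (bddAbove_pathset edge hedge u v x y) ⟨l, hc, hh, hl, hlen, rfl⟩)
        (le_max_right _ _)
    have h2 : Wmax edge u v x y ≤ Wtil edge u v i j :=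
      le_csSup hBij ⟨x, y, hix, hxy, hyj, rfl⟩
    linarith
  by_cases hjx : j ≤ x
  · have h1 : wsum u v l ≤ Wmax edge u v x y :=
      le_trans (le_csSup (bddAbove_pathset edge hedge u v x y) ⟨l, hc, hh, hl, hlen, rfl⟩)
        (le_max_right _ _)
    have h2 : Wmax edge u v x y ≤ Wtil edge u v j k :=
      le_csSup hBjk ⟨x, y, hjx, hxy, hyk, rfl⟩
    linarith
  push_neg at hyj hjx
  -- x < j < y : split the path at j
  set p : ℤ → Bool := fun a => decide (a < j) with hpdef
  set l1 := l.takeWhile p with hl1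
  set l2 := l.dropWhile p with hl2
  have hsplit : l1 ++ l2 = l := List.takeWhile_append_dropWhile (p := p) (l := l)
  have h1ne : l1 ≠ [] := by
    intro hnil
    obtain ⟨t, rfl⟩ : ∃ t, l = x :: t := by
      cases l with
      | nil => simp at hh
      | cons c t => simp at hh; exact ⟨t, by rw [hh]⟩
    rw [hl1, List.takeWhile_cons] at hnil
    simp only [hpdef] at hnil
    rw [if_pos (by simpa using hjx)] at hnil
    simp at hnil
  have h2ne : l2 ≠ [] := by
    intro hnil
    have hy : y ∈ l := List.mem_of_getLast? hl
    have := List.dropWhile_eq_nil_iff.mp hnil y hy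
    simp [hpdef] at this
    omega
  have hh1 : l1.head? = some x := by
    have h := hh
    rw [← hsplit, List.head?_append, List.head?_eq_head h1ne] at h
    simp at h
    rw [List.head?_eq_head h1ne, h]
  have hl2y : l2.getLast? = some y := by
    have h := hl
    rw [← hsplit, List.getLast?_append, List.getLast?_eq_getLast h2ne] at h
    simp at h
    rw [List.getLast?_eq_getLast h2ne, h]
  set a := l1.getLast h1ne with ha
  set b := l2.head h2ne with hb
  have hl1a : l1.getLast? = some a := List.getLast?_eq_getLast h1ne
  have hh2 : l2.head? = some b := List.head?_eq_head h2ne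
  have haj : a < j := by
    have := List.mem_takeWhile_imp (l1.getLast_mem h1ne)
    simpa [hpdef] using this
  have hjb : j ≤ b := by
    have := List.head_dropWhile_not p h2ne
    simp [hpdef] at this
    exact this
  have hmem1 : ∀ c ∈ l1, c ∈ l := fun c hc' => hsplit ▸ List.mem_append_left l2 hc'
  have hmem2 : ∀ c ∈ l2, c ∈ l := fun c hc' => hsplit ▸ List.mem_append_right l1 hc'
  have hia : i ≤ a := le_trans hix (pairwise_head_le hp hh (hmem1 a (l1.getLast_mem h1ne)))
  have hbk : b ≤ k := le_trans (pairwise_le_last hp hl (hmem2 b (l2.head_mem h2ne))) hyk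
  -- chain decomposition
  have hc' : List.Chain' edge (l1 ++ l2) := hsplit ▸ hc
  obtain ⟨hc1, hc2, _⟩ := List.isChain_append.mp hc'
  have hp1 : l1.Pairwise (· < ·) := hp.sublist (List.takeWhile_sublist p)
  have hp2 : l2.Pairwise (· < ·) := hp.sublist (List.dropWhile_sublist p)
  have hwsum : wsum u v l = wsum u v l1 + (v a + u a b) + wsum u v l2 := by
    rw [← hsplit]; exact wsum_append u v l1 hl1a hh2
  have term1 : wsum u v l1 ≤ Wtil edge u v i j := by
    by_cases h2l : 2 ≤ l1.length
    · have hxa : x < a := pairwise_head_lt_last hp1 hh1 hl1a h2l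
      have hW : wsum u v l1 ≤ Wmax edge u v x a :=
        le_trans (le_csSup (bddAbove_pathset edge hedge u v x a)
          ⟨l1, hc1, hh1, hl1a, h2l, rfl⟩) (le_max_right _ _)
      exact le_trans hW (le_csSup hBij ⟨x, a, hix, hxa, le_of_lt haj, rfl⟩)
    · have hlen1 : l1.length = 1 := by
        have := List.length_pos_iff.mpr h1ne; omega
      obtain ⟨c, hc1'⟩ := List.length_eq_one_iff.mp hlen1
      rw [hc1', wsum_single]; exact hWij0
  have term3 : wsum u v l2 ≤ Wtil edge u v j k := by
    by_cases h2l : 2 ≤ l2.length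
    · have hby : b < y := pairwise_head_lt_last hp2 hh2 hl2y h2l
      have hW : wsum u v l2 ≤ Wmax edge u v b y :=
        le_trans (le_csSup (bddAbove_pathset edge hedge u v b y)
          ⟨l2, hc2, hh2, hl2y, h2l, rfl⟩) (le_max_right _ _)
      exact le_trans hW (le_csSup hBjk ⟨b, y, hjb, hby, hyk, rfl⟩)
    · have hlen2 : l2.length = 1 := by
        have := List.length_pos_iff.mpr h2ne; omega
      obtain ⟨c, hc2'⟩ := List.length_eq_one_iff.mp hlen2
      rw [hc2', wsum_single]; exact hWjk0
  have term2 : v a + u a b ≤ B := by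
    refine le_trans (le_max_right 0 _) (le_csSup hBc ?_)
    exact ⟨a, b, hia, le_of_lt haj, hjb, hbk, rfl⟩
  linarith
end

section
/- Let F⁺ and F⁻ be independent σ-algebras, G⁺ ⊆ F⁺ and G⁻ ⊆ F⁻ sub-σ-algebras, and G a σ-algebra independent of F⁺ ∨ F⁻. Then F⁺ and F⁻ are conditionally independent given G⁻ ∨ G⁺ ∨ G. -/
open MeasureTheory ProbabilityTheory

section Aux

lemma aux_indepFun {Ω : Type*} {m₁ m₂ m0 : MeasurableSpace Ω} {μ : Measure Ω}
    (h : Indep m₁ m₂ μ) {f g : Ω → ℝ}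
    (hf : Measurable[m₁] f) (hg : Measurable[m₂] g) : IndepFun f g μ := by
  rw [IndepFun_iff_Indep]
  exact indep_of_indep_of_le_right (indep_of_indep_of_le_left h hf.comap_le) hg.comap_le

lemma aux_integral_mul_mul {Ω : Type*} {Fp Fm G : MeasurableSpace Ω} {m0 : MeasurableSpace Ω}
    (μ : Measure Ω)
    (hFp : Fp ≤ m0) (hFm : Fm ≤ m0) (hG : G ≤ m0)
    (hind : Indep Fp Fm μ) (hindG : Indep (Fp ⊔ Fm) G μ)
    {X Y Z : Ω → ℝ} (hX : Measurable[Fp] X) (hY : Measurable[Fm] Y) (hZ : Measurable[G] Z) :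
    ∫ x, X x * Y x * Z x ∂μ = (∫ x, X x ∂μ) * (∫ x, Y x ∂μ) * (∫ x, Z x ∂μ) := by
  have hXY : Measurable[Fp ⊔ Fm] (fun x => X x * Y x) :=
    ((hX.mono le_sup_left le_rfl).mul (hY.mono le_sup_right le_rfl))
  have h1 : ∫ x, (fun x => X x * Y x) x * Z x ∂μ
      = (∫ x, X x * Y x ∂μ) * ∫ x, Z x ∂μ :=
    (aux_indepFun hindG hXY hZ).integral_mul_eq_mul_integral
      (hXY.mono (sup_le hFp hFm) le_rfl).aestronglyMeasurable
      (hZ.mono hG le_rfl).aestronglyMeasurable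
  have h2 : ∫ x, X x * Y x ∂μ = (∫ x, X x ∂μ) * ∫ x, Y x ∂μ :=
    (aux_indepFun hind hX hY).integral_mul_eq_mul_integral
      (hX.mono hFp le_rfl).aestronglyMeasurable
      (hY.mono hFm le_rfl).aestronglyMeasurable
  rw [← h2]; exact h1

lemma aux_ind_mul {Ω : Type*} (t : Set Ω) (h : Ω → ℝ) :
    (fun x => Set.indicator t (fun _ => (1:ℝ)) x * h x) = t.indicator h := by
  funext x; by_cases hx : x ∈ t <;> simp [hx]

lemma aux_factor {Ω : Type*} {m' : MeasurableSpace Ω} {m0 : MeasurableSpace Ω}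
    (μ : Measure Ω) [IsProbabilityMeasure μ] (hm' : m' ≤ m0)
    {t A : Set Ω} (ht : MeasurableSet[m'] t) (hA : MeasurableSet[m0] A) :
    ∫ x, Set.indicator t (fun _ => (1:ℝ)) x * (μ[Set.indicator A (fun _ => (1:ℝ))|m']) x ∂μ
      = ∫ x, Set.indicator t (fun _ => (1:ℝ)) x * Set.indicator A (fun _ => (1:ℝ)) x ∂μ := by
  have hI : Integrable (Set.indicator A (fun _ => (1:ℝ))) μ :=
    (integrable_const (1:ℝ)).indicator hA
  have hSC := setIntegral_condExp hm' hI ht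
  rw [aux_ind_mul, aux_ind_mul, integral_indicator (hm' t ht), integral_indicator (hm' t ht), hSC]

lemma aux_bdd {Ω : Type*} {m' : MeasurableSpace Ω} {m0 : MeasurableSpace Ω}
    (μ : Measure Ω) [IsProbabilityMeasure μ] (hm' : m' ≤ m0)
    {A : Set Ω} (hA : MeasurableSet[m0] A) :
    ∀ᵐ x ∂μ, ‖(μ[Set.indicator A (fun _ => (1:ℝ))|m']) x‖ ≤ 1 := by
  have hI : Integrable (Set.indicator A (fun _ => (1:ℝ))) μ :=
    (integrable_const (1:ℝ)).indicator hA
  have h0 : 0 ≤ᵐ[μ] μ[Set.indicator A (fun _ => (1:ℝ))|m'] :=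
    condExp_nonneg (Filter.Eventually.of_forall fun x =>
      Set.indicator_nonneg (fun _ _ => zero_le_one) x)
  have h1 : μ[Set.indicator A (fun _ => (1:ℝ))|m'] ≤ᵐ[μ] μ[(fun _ => (1:ℝ))|m'] :=
    condExp_mono hI (integrable_const (1:ℝ))
      (Filter.Eventually.of_forall fun x =>
        Set.indicator_apply_le' (fun _ => le_rfl) (fun _ => zero_le_one))
  rw [condExp_const hm' (1:ℝ)] at h1
  filter_upwards [h0, h1] with x hx0 hx1
  rw [Real.norm_eq_abs, abs_le]
  have hx0' : (0:ℝ) ≤ (μ[Set.indicator A (fun _ => (1:ℝ))|m']) x := by simpa using hx0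
  exact ⟨by linarith, hx1⟩

/-- The key lemma. -/
lemma aux_key {Ω : Type*} {Fp Fm Gp Gm G : MeasurableSpace Ω} {m0 : MeasurableSpace Ω}
    (μ : Measure Ω) [IsProbabilityMeasure μ]
    (hFp : Fp ≤ m0) (hFm : Fm ≤ m0) (hG : G ≤ m0)
    (hGp : Gp ≤ Fp) (hGm : Gm ≤ Fm)
    (hind : Indep Fp Fm μ) (hindG : Indep (Fp ⊔ Fm) G μ)
    (A B : Set Ω) (hA : MeasurableSet[Fp] A) (hB : MeasurableSet[Fm] B) :
    (fun ω => (μ[Set.indicator A (fun _ => (1:ℝ))|Gp]) ω *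
        (μ[Set.indicator B (fun _ => (1:ℝ))|Gm]) ω)
      =ᵐ[μ] μ[Set.indicator (A ∩ B) (fun _ => (1:ℝ)) | Gm ⊔ Gp ⊔ G] := by
  have hGp' : Gp ≤ m0 := hGp.trans hFp
  have hGm' : Gm ≤ m0 := hGm.trans hFm
  have hH : Gm ⊔ Gp ⊔ G ≤ m0 := sup_le (sup_le hGm' hGp') hG
  have hGpH : Gp ≤ Gm ⊔ Gp ⊔ G := le_trans le_sup_right le_sup_left
  have hGmH : Gm ≤ Gm ⊔ Gp ⊔ G := le_trans le_sup_left le_sup_left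
  have hGH : G ≤ Gm ⊔ Gp ⊔ G := le_sup_right
  have hABm : MeasurableSet[m0] (A ∩ B) := (hFp A hA).inter (hFm B hB)
  have hIf : Integrable (Set.indicator (A ∩ B) (fun _ => (1:ℝ))) μ :=
    (integrable_const (1:ℝ)).indicator hABm
  have hg_int : Integrable (fun ω => (μ[Set.indicator A (fun _ => (1:ℝ))|Gp]) ω *
      (μ[Set.indicator B (fun _ => (1:ℝ))|Gm]) ω) μ :=
    Integrable.bdd_mul integrable_condExp
      ((stronglyMeasurable_condExp.mono hGp').aestronglyMeasurable)
      (aux_bdd μ hGp' (hFp A hA))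
  -- the π-system
  set p : Set (Set Ω) := {s : Set Ω | ∃ t1 t2 t3, MeasurableSet[Gm] t1 ∧ MeasurableSet[Gp] t2 ∧
    MeasurableSet[G] t3 ∧ s = t1 ∩ t2 ∩ t3} with hp
  have h_pi : IsPiSystem p := by
    rintro s ⟨t1, t2, t3, h1, h2, h3, rfl⟩ u ⟨u1, u2, u3, g1, g2, g3, rfl⟩ -
    refine ⟨t1 ∩ u1, t2 ∩ u2, t3 ∩ u3, h1.inter g1, h2.inter g2, h3.inter g3, ?_⟩
    ext x
    simp only [Set.mem_inter_iff]
    tauto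
  have h_eq : (Gm ⊔ Gp ⊔ G) = MeasurableSpace.generateFrom p := by
    apply le_antisymm
    · refine sup_le (sup_le ?_ ?_) ?_ <;> intro t ht <;>
        apply MeasurableSpace.measurableSet_generateFrom
      · exact ⟨t, Set.univ, Set.univ, ht, MeasurableSet.univ, MeasurableSet.univ, by simp⟩
      · exact ⟨Set.univ, t, Set.univ, MeasurableSet.univ, ht, MeasurableSet.univ, by simp⟩
      · exact ⟨Set.univ, Set.univ, t, MeasurableSet.univ, MeasurableSet.univ, ht, by simp⟩
    · apply MeasurableSpace.generateFrom_le
      rintro s ⟨t1, t2, t3, h1, h2, h3, rfl⟩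
      exact MeasurableSet.inter (MeasurableSet.inter (hGmH t1 h1) (hGpH t2 h2)) (hGH t3 h3)
  -- the basic computation
  have hbasic : ∀ t1 t2 t3 : Set Ω, MeasurableSet[Gm] t1 → MeasurableSet[Gp] t2 →
      MeasurableSet[G] t3 →
      ∫ x in t1 ∩ t2 ∩ t3, (μ[Set.indicator A (fun _ => (1:ℝ))|Gp]) x *
          (μ[Set.indicator B (fun _ => (1:ℝ))|Gm]) x ∂μ
        = ∫ x in t1 ∩ t2 ∩ t3, Set.indicator (A ∩ B) (fun _ => (1:ℝ)) x ∂μ := by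
    intro t1 t2 t3 h1 h2 h3
    have hm1 : MeasurableSet[m0] t1 := hGm' t1 h1
    have hm2 : MeasurableSet[m0] t2 := hGp' t2 h2
    have hm3 : MeasurableSet[m0] t3 := hG t3 h3
    have hs : MeasurableSet[m0] (t1 ∩ t2 ∩ t3) := (hm1.inter hm2).inter hm3
    have hX : Measurable[Fp] (fun x => Set.indicator t2 (fun _ => (1:ℝ)) x *
        (μ[Set.indicator A (fun _ => (1:ℝ))|Gp]) x) := by
      have : Measurable[Gp] (fun x => Set.indicator t2 (fun _ => (1:ℝ)) x *
          (μ[Set.indicator A (fun _ => (1:ℝ))|Gp]) x) :=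
        (measurable_const.indicator h2).mul stronglyMeasurable_condExp.measurable
      exact this.mono hGp le_rfl
    have hY : Measurable[Fm] (fun x => Set.indicator t1 (fun _ => (1:ℝ)) x *
        (μ[Set.indicator B (fun _ => (1:ℝ))|Gm]) x) := by
      have : Measurable[Gm] (fun x => Set.indicator t1 (fun _ => (1:ℝ)) x *
          (μ[Set.indicator B (fun _ => (1:ℝ))|Gm]) x) :=
        (measurable_const.indicator h1).mul stronglyMeasurable_condExp.measurable
      exact this.mono hGm le_rfl
    have hZ : Measurable[G] (fun x => Set.indicator t3 (fun _ => (1:ℝ)) x) :=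
      measurable_const.indicator h3
    have hX' : Measurable[Fp] (fun x => Set.indicator t2 (fun _ => (1:ℝ)) x *
        Set.indicator A (fun _ => (1:ℝ)) x) :=
      ((measurable_const.indicator h2).mono hGp le_rfl).mul (measurable_const.indicator hA)
    have hY' : Measurable[Fm] (fun x => Set.indicator t1 (fun _ => (1:ℝ)) x *
        Set.indicator B (fun _ => (1:ℝ)) x) :=
      ((measurable_const.indicator h1).mono hGm le_rfl).mul (measurable_const.indicator hB)
    have e1 : ∀ x : Ω, Set.indicator (t1 ∩ t2 ∩ t3)
        (fun a => (μ[Set.indicator A (fun _ => (1:ℝ))|Gp]) a *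
          (μ[Set.indicator B (fun _ => (1:ℝ))|Gm]) a) x
        = (Set.indicator t2 (fun _ => (1:ℝ)) x * (μ[Set.indicator A (fun _ => (1:ℝ))|Gp]) x) *
          (Set.indicator t1 (fun _ => (1:ℝ)) x * (μ[Set.indicator B (fun _ => (1:ℝ))|Gm]) x) *
          Set.indicator t3 (fun _ => (1:ℝ)) x := by
      intro x
      by_cases x1 : x ∈ t1 <;> by_cases x2 : x ∈ t2 <;> by_cases x3 : x ∈ t3 <;>
        simp [Set.indicator_apply, x1, x2, x3]
    have e2 : ∀ x : Ω, Set.indicator (t1 ∩ t2 ∩ t3)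
        (Set.indicator (A ∩ B) (fun _ => (1:ℝ))) x
        = (Set.indicator t2 (fun _ => (1:ℝ)) x * Set.indicator A (fun _ => (1:ℝ)) x) *
          (Set.indicator t1 (fun _ => (1:ℝ)) x * Set.indicator B (fun _ => (1:ℝ)) x) *
          Set.indicator t3 (fun _ => (1:ℝ)) x := by
      intro x
      by_cases x1 : x ∈ t1 <;> by_cases x2 : x ∈ t2 <;> by_cases x3 : x ∈ t3 <;>
        by_cases xA : x ∈ A <;> by_cases xB : x ∈ B <;>
        simp [Set.indicator_apply, x1, x2, x3, xA, xB]
    calc ∫ x in t1 ∩ t2 ∩ t3, (μ[Set.indicator A (fun _ => (1:ℝ))|Gp]) x *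
            (μ[Set.indicator B (fun _ => (1:ℝ))|Gm]) x ∂μ
        = ∫ x, (Set.indicator t2 (fun _ => (1:ℝ)) x *
              (μ[Set.indicator A (fun _ => (1:ℝ))|Gp]) x) *
            (Set.indicator t1 (fun _ => (1:ℝ)) x *
              (μ[Set.indicator B (fun _ => (1:ℝ))|Gm]) x) *
            Set.indicator t3 (fun _ => (1:ℝ)) x ∂μ := by
          rw [← integral_indicator hs]
          exact integral_congr_ae (Filter.Eventually.of_forall e1)
      _ = (∫ x, Set.indicator t2 (fun _ => (1:ℝ)) x *
              (μ[Set.indicator A (fun _ => (1:ℝ))|Gp]) x ∂μ) *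
          (∫ x, Set.indicator t1 (fun _ => (1:ℝ)) x *
              (μ[Set.indicator B (fun _ => (1:ℝ))|Gm]) x ∂μ) *
          (∫ x, Set.indicator t3 (fun _ => (1:ℝ)) x ∂μ) :=
        aux_integral_mul_mul μ hFp hFm hG hind hindG hX hY hZ
      _ = (∫ x, Set.indicator t2 (fun _ => (1:ℝ)) x * Set.indicator A (fun _ => (1:ℝ)) x ∂μ) *
          (∫ x, Set.indicator t1 (fun _ => (1:ℝ)) x * Set.indicator B (fun _ => (1:ℝ)) x ∂μ) *
          (∫ x, Set.indicator t3 (fun _ => (1:ℝ)) x ∂μ) := by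
        rw [aux_factor μ hGp' h2 (hFp A hA), aux_factor μ hGm' h1 (hFm B hB)]
      _ = ∫ x, (Set.indicator t2 (fun _ => (1:ℝ)) x * Set.indicator A (fun _ => (1:ℝ)) x) *
            (Set.indicator t1 (fun _ => (1:ℝ)) x * Set.indicator B (fun _ => (1:ℝ)) x) *
            Set.indicator t3 (fun _ => (1:ℝ)) x ∂μ :=
        (aux_integral_mul_mul μ hFp hFm hG hind hindG hX' hY' hZ).symm
      _ = ∫ x in t1 ∩ t2 ∩ t3, Set.indicator (A ∩ B) (fun _ => (1:ℝ)) x ∂μ := by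
        rw [← integral_indicator hs]
        exact integral_congr_ae (Filter.Eventually.of_forall fun x => (e2 x).symm)
  have htot : ∫ x, (μ[Set.indicator A (fun _ => (1:ℝ))|Gp]) x *
      (μ[Set.indicator B (fun _ => (1:ℝ))|Gm]) x ∂μ
      = ∫ x, Set.indicator (A ∩ B) (fun _ => (1:ℝ)) x ∂μ := by
    have := hbasic Set.univ Set.univ Set.univ MeasurableSet.univ MeasurableSet.univ
      MeasurableSet.univ
    simpa using this
  have hg_eq : ∀ s : Set Ω, MeasurableSet[Gm ⊔ Gp ⊔ G] s →
      ∫ x in s, (μ[Set.indicator A (fun _ => (1:ℝ))|Gp]) x *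
          (μ[Set.indicator B (fun _ => (1:ℝ))|Gm]) x ∂μ
        = ∫ x in s, Set.indicator (A ∩ B) (fun _ => (1:ℝ)) x ∂μ := by
    intro s hs
    refine MeasurableSpace.induction_on_inter (m := Gm ⊔ Gp ⊔ G)
      (C := fun s _ => ∫ x in s, (μ[Set.indicator A (fun _ => (1:ℝ))|Gp]) x *
          (μ[Set.indicator B (fun _ => (1:ℝ))|Gm]) x ∂μ
        = ∫ x in s, Set.indicator (A ∩ B) (fun _ => (1:ℝ)) x ∂μ)
      h_eq h_pi (by simp) ?_ ?_ ?_ s hs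
    · rintro t ⟨t1, t2, t3, h1, h2, h3, rfl⟩
      exact hbasic t1 t2 t3 h1 h2 h3
    · intro t htH ht
      have htm : MeasurableSet[m0] t := hH t htH
      have hadd1 := integral_add_compl htm hg_int
      have hadd2 := integral_add_compl htm hIf
      have e : ∫ x in t, (μ[Set.indicator A (fun _ => (1:ℝ))|Gp]) x *
          (μ[Set.indicator B (fun _ => (1:ℝ))|Gm]) x ∂μ
          = ∫ x in t, Set.indicator (A ∩ B) (fun _ => (1:ℝ)) x ∂μ := ht
      linarith
    · intro f hdisj hfH hC
      have hfm : ∀ i, MeasurableSet[m0] (f i) := fun i => hH _ (hfH i)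
      rw [integral_iUnion hfm hdisj hg_int.integrableOn,
        integral_iUnion hfm hdisj hIf.integrableOn]
      exact tsum_congr hC
  have hgm : AEStronglyMeasurable[Gm ⊔ Gp ⊔ G]
      (fun ω => (μ[Set.indicator A (fun _ => (1:ℝ))|Gp]) ω *
        (μ[Set.indicator B (fun _ => (1:ℝ))|Gm]) ω) μ :=
    ((stronglyMeasurable_condExp.mono hGpH).mul
      (stronglyMeasurable_condExp.mono hGmH)).aestronglyMeasurable
  exact ae_eq_condExp_of_forall_setIntegral_eq hH hIf
    (fun s _ _ => hg_int.integrableOn) (fun s hs _ => hg_eq s hs) hgm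

end Aux

/-- If `F⁺` and `F⁻` are independent σ-algebras, `G⁺ ⊆ F⁺`, `G⁻ ⊆ F⁻`, and `G` is
independent of `F⁺ ⊔ F⁻`, then `F⁺` and `F⁻` are conditionally independent given
`G⁻ ⊔ G⁺ ⊔ G`: for `A ∈ F⁺`, `B ∈ F⁻`,
`E[1_{A∩B} | G⁻ ⊔ G⁺ ⊔ G] = E[1_A | ·]·E[1_B | ·]` a.s. -/
theorem stmt16 {Ω : Type*} {m0 : MeasurableSpace Ω} (μ : Measure Ω)
    [IsProbabilityMeasure μ]
    (Fp Fm Gp Gm G : MeasurableSpace Ω)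
    (hFp : Fp ≤ m0) (hFm : Fm ≤ m0) (hG : G ≤ m0)
    (hGp : Gp ≤ Fp) (hGm : Gm ≤ Fm)
    (hind : Indep Fp Fm μ)
    (hindG : Indep (Fp ⊔ Fm) G μ) :
    ∀ A B : Set Ω, MeasurableSet[Fp] A → MeasurableSet[Fm] B →
      (μ[Set.indicator (A ∩ B) (fun _ => (1 : ℝ)) | Gm ⊔ Gp ⊔ G]) =ᵐ[μ]
        fun ω => (μ[Set.indicator A (fun _ => (1 : ℝ)) | Gm ⊔ Gp ⊔ G]) ω *
          (μ[Set.indicator B (fun _ => (1 : ℝ)) | Gm ⊔ Gp ⊔ G]) ω := by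
  intro A B hA hB
  have hGp' : Gp ≤ m0 := hGp.trans hFp
  have hGm' : Gm ≤ m0 := hGm.trans hFm
  have k1 := aux_key μ hFp hFm hG hGp hGm hind hindG A B hA hB
  have k2 := aux_key μ hFp hFm hG hGp hGm hind hindG A Set.univ hA MeasurableSet.univ
  have k3 := aux_key μ hFp hFm hG hGp hGm hind hindG Set.univ B MeasurableSet.univ hB
  rw [Set.indicator_univ, condExp_const hGm' (1:ℝ), Set.inter_univ] at k2
  rw [Set.indicator_univ, condExp_const hGp' (1:ℝ), Set.univ_inter] at k3
  simp only [mul_one] at k2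
  simp only [one_mul] at k3
  filter_upwards [k1, k2, k3] with ω h1 h2 h3
  rw [← h1, ← h2, ← h3]
end

section
/- In the notation of the c-renewal points: with A₀ = ⋂_{m,n≥1} {Ŵ_{-m,0} ≥ cm, Ŵ_{0,n} ≥ cn, U_{-m,n} < c(m+n)} and, for k > 0, A_k and its truncation Ã_k = ⋂_{1≤m≤k, n≥1} {Ŵ_{k-m,k} ≥ cm, Ŵ_{k,k+n} ≥ cn, U_{k-m,k+n} < c(m+n)}, one has the set identity A₀ ∩ A_k = A₀ ∩ Ã_k. -/
/-- Deterministic identity `A₀ ∩ A_k = A₀ ∩ Ã_k` for the c-renewal events. Here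
`What a b` is the maximal weight of a directed path from `a` to `b` and `U i j` the
weight of the direct edge `(i,j)` (0 if absent); `hsplit` expresses the additivity
property `Ŵ_{x,y} ≥ Ŵ_{x,0} + Ŵ_{0,y}` for `x < 0 < y`, which holds on `A₀`. -/
theorem stmt17 (What U : ℤ → ℤ → ℝ) (c : ℝ) (hc : 0 < c) (k : ℤ) (hk : 0 < k)
    (hsplit : ∀ x y : ℤ, x < 0 → 0 < y → What x 0 + What 0 y ≤ What x y) :
    -- A₀
    ((∀ m : ℤ, 1 ≤ m → c * m ≤ What (-m) 0) ∧
     (∀ n : ℤ, 1 ≤ n → c * n ≤ What 0 n) ∧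
     (∀ m n : ℤ, 1 ≤ m → 1 ≤ n → U (-m) n < c * (m + n))) →
    -- A₀ ∩ A_k = A₀ ∩ Ã_k, i.e. Ã_k ↔ A_k given A₀
    ((((∀ m : ℤ, 1 ≤ m → m ≤ k → c * m ≤ What (k - m) k) ∧
       (∀ n : ℤ, 1 ≤ n → c * n ≤ What k (k + n)) ∧
       (∀ m n : ℤ, 1 ≤ m → m ≤ k → 1 ≤ n → U (k - m) (k + n) < c * (m + n)))) ↔
     (((∀ m : ℤ, 1 ≤ m → c * m ≤ What (k - m) k) ∧
       (∀ n : ℤ, 1 ≤ n → c * n ≤ What k (k + n)) ∧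
       (∀ m n : ℤ, 1 ≤ m → 1 ≤ n → U (k - m) (k + n) < c * (m + n))))) := by

  rintro ⟨hW0, hW0', hU0⟩
  constructor
  · rintro ⟨h1, h2, h3⟩
    refine ⟨fun m hm => ?_, h2, fun m n hm hn => ?_⟩
    · by_cases hmk : m ≤ k
      · exact h1 m hm hmk
      · push_neg at hmk
        have h1' : k - m < 0 := by linarith
        have hsum := hsplit (k - m) k h1' hk
        have ha := hW0 (m - k) (by linarith : (1:ℤ) ≤ m - k)
        have hb : c * k ≤ What 0 k := hW0' k (by linarith)
        have : (-(m - k) : ℤ) = k - m := by ring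
        rw [this] at ha
        have : ((m : ℝ) - k) = ((m - k : ℤ) : ℝ) := by push_cast; ring
        calc c * m = c * ((m:ℝ) - k) + c * k := by ring
          _ ≤ What (k - m) 0 + What 0 k := by
              apply add_le_add _ hb
              have := ha; push_cast at this ⊢; linarith
          _ ≤ What (k - m) k := hsum
    · by_cases hmk : m ≤ k
      · exact h3 m n hm hmk hn
      · push_neg at hmk
        have := hU0 (m - k) (k + n) (by linarith) (by linarith)
        have he : (-(m - k) : ℤ) = k - m := by ring
        rw [he] at this
        push_cast at this ⊢
        linarith
  · rintro ⟨h1, h2, h3⟩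
    exact ⟨fun m hm _ => h1 m hm, h2, fun m n hm _ hn => h3 m n hm hn⟩
end
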